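/- arXiv:1109.4475 — 8 statements merged into one kernel-verified Lean document; each statement's English description precedes it below -/
import Mathlib

section
/- For the complete directed graph G_n on n vertices, the number of spanning directed rooted trees T of G_n with d_T(c) = n-1-k for a fixed vertex c equals binomial(n-1, k) * (n-1)^k, where d_T(c) is the out-degree of c in T. -/
/-- `IsDipath T a b p` : `p` is the list of successive vertices (after `a`) of a
directed path from `a` to `b` using edges of the relation `T`. -/
def IsDipath {V : Type} (T : V → V → Prop) : V → V → List V → Prop
  | a, b, [] => a = b
  | a, b, c :: p => T a c ∧ IsDipath T c b p

/-- `T` is a spanning directed rooted tree of the digraph `E` with root `r`: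
its edges are edges of `E` and every vertex is reached by a unique directed path from `r`. -/
def IsSpanningDitree {V : Type} (E T : V → V → Prop) (r : V) : Prop :=
  (∀ x y, T x y → E x y) ∧ ∀ x : V, ∃! p : List V, IsDipath T r x p

/-- The edge relation associated to a finite set of directed edges. -/
def edgeRel {V : Type} [DecidableEq V] (F : Finset (V × V)) : V → V → Prop :=
  fun x y => (x, y) ∈ F

/-- A finite set of directed edges is a directed forest in the digraph `E`:
all edges belong to `E`, every vertex has in-degree at most one, and there are
no directed cycles.  (Equivalently, it is a disjoint union of directed rooted trees.) -/
def IsDirectedForest {V : Type} [DecidableEq V] (E : V → V → Prop) (F : Finset (V × V)) : Prop :=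
  (∀ e ∈ F, E e.1 e.2) ∧
  (∀ x y y' : V, (y, x) ∈ F → (y', x) ∈ F → y = y') ∧
  ∀ (x : V) (p : List V), p ≠ [] → ¬ IsDipath (edgeRel F) x x p

/-- A facet of the complex of directed trees `Δ(E)`: a maximal directed forest. -/
def IsFacet {V : Type} [DecidableEq V] (E : V → V → Prop) (F : Finset (V × V)) : Prop :=
  IsDirectedForest E F ∧ ∀ F', IsDirectedForest E F' → F ⊆ F' → F' = F

/-- Finset version of a spanning directed rooted tree. -/
def IsSpanningTreeFinset {V : Type} [DecidableEq V] (E : V → V → Prop)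
    (T : Finset (V × V)) (r : V) : Prop :=
  (∀ e ∈ T, E e.1 e.2) ∧ ∀ x : V, ∃! p : List V, IsDipath (edgeRel T) r x p

/-- The out-degree of a vertex `c` in a finite set of directed edges. -/
def outDeg {V : Type} [DecidableEq V] (T : Finset (V × V)) (c : V) : ℕ :=
  (T.filter fun e => e.1 = c).card

namespace TreeCount

variable {α : Type} [LinearOrder α]

/-- Parent-function presentation of a rooted tree on the finite vertex set `V`. -/
def IsTree (V : Finset α) (r : α) (f : α → α) : Prop :=
  r ∈ V ∧ (∀ x, x ∉ V → f x = x) ∧ (∀ x ∈ V, f x ∈ V) ∧ f r = r ∧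
    (∀ x ∈ V, x ≠ r → f x ≠ x) ∧ ∀ x ∈ V, ∃ m, f^[m] x = r

/-- The leaves of a tree: non-root vertices with no child. -/
def leaves (V : Finset α) (r : α) (f : α → α) : Finset α :=
  V.filter fun v => v ≠ r ∧ ∀ y ∈ V, y ≠ r → f y ≠ v

theorem child_exists {V : Finset α} {r : α} {f : α → α} (h : IsTree V r f)
    {x : α} (hx : x ∈ V) (hxr : x ≠ r) : ∃ z ∈ V, z ≠ r ∧ f z = r := by
  obtain ⟨hr, hnorm, hmem, hfr, hne, hreach⟩ := h
  have hex : ∃ m, f^[m] x = r := hreach x hx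
  have hiter : ∀ m, f^[m] x ∈ V := by
    intro m
    induction m with
    | zero => simpa using hx
    | succ m ih => rw [Function.iterate_succ_apply']; exact hmem _ ih
  classical
  let m := Nat.find hex
  have hm : f^[m] x = r := Nat.find_spec hex
  have hm1 : m ≠ 0 := by
    intro h0
    apply hxr
    simpa [h0] using hm
  obtain ⟨m', hm'⟩ := Nat.exists_eq_succ_of_ne_zero hm1
  refine ⟨f^[m'] x, hiter m', ?_, ?_⟩
  · intro hEq
    exact Nat.find_min hex (by omega : m' < m) hEq
  · have := Function.iterate_succ_apply' f m' x
    rw [← this, ← hm']; exact hm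

theorem leaf_exists {V : Finset α} {r : α} {f : α → α} (h : IsTree V r f)
    (hne : (V.erase r).Nonempty) : (leaves V r f).Nonempty := by
  classical
  obtain ⟨hr, hnorm, hmem, hfr, hfne, hreach⟩ := h
  -- depth function
  have hd : ∀ x ∈ V, ∃ m, f^[m] x = r := hreach
  set d : α → ℕ := fun x => if hx : ∃ m, f^[m] x = r then Nat.find hx else 0 with hdDef
  obtain ⟨x₀, hx₀, hmax⟩ := Finset.exists_max_image (V.erase r) d hne
  have hx₀V : x₀ ∈ V := Finset.mem_of_mem_erase hx₀
  have hx₀r : x₀ ≠ r := Finset.ne_of_mem_erase hx₀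
  refine ⟨x₀, ?_⟩
  rw [leaves, Finset.mem_filter]
  refine ⟨hx₀V, hx₀r, ?_⟩
  intro y hy hyr hEq
  -- then d y > d x₀ contradiction
  have hyD : ∃ m, f^[m] y = r := hreach y hy
  have hx₀D : ∃ m, f^[m] x₀ = r := hreach x₀ hx₀V
  have hdy : d y = Nat.find hyD := by simp [hdDef, hyD]
  have hdx : d x₀ = Nat.find hx₀D := by simp [hdDef, hx₀D]
  have hy1 : Nat.find hyD ≠ 0 := by
    intro h0
    apply hyr
    have := Nat.find_spec hyD
    simpa [h0] using this
  obtain ⟨m', hm'⟩ := Nat.exists_eq_succ_of_ne_zero hy1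
  have hspec : f^[Nat.find hyD] y = r := Nat.find_spec hyD
  rw [hm', Function.iterate_succ_apply, hEq] at hspec
  -- f^[m'] x₀ = r, so d x₀ ≤ m'
  have hle : Nat.find hx₀D ≤ m' := Nat.find_min' hx₀D hspec
  have hylt : d x₀ < d y := by
    rw [hdy, hdx, hm']
    omega
  have := hmax y (Finset.mem_erase.2 ⟨hyr, hy⟩)
  omega

theorem iterate_update_of_ne {f : α → α} {W : Finset α} (hmem : ∀ y ∈ W, f y ∈ W)
    {x : α} (hx : x ∉ W) (a : α) :
    ∀ m, ∀ y ∈ W, (Function.update f x a)^[m] y = f^[m] y := by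
  intro m
  induction m with
  | zero => intro y _; simp
  | succ m ih =>
    intro y hy
    rw [Function.iterate_succ_apply, Function.iterate_succ_apply]
    have hyx : y ≠ x := fun h => hx (h ▸ hy)
    rw [Function.update_of_ne hyx]
    exact ih (f y) (hmem y hy)

/-- Removing a leaf from a tree gives a tree. -/
theorem erase_leaf {V : Finset α} {r : α} {f : α → α} (h : IsTree V r f)
    {x : α} (hx : x ∈ leaves V r f) :
    IsTree (V.erase x) r (Function.update f x x) := by
  classical
  obtain ⟨hr, hnorm, hmem, hfr, hfne, hreach⟩ := h
  rw [leaves, Finset.mem_filter] at hx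
  obtain ⟨hxV, hxr, hleaf⟩ := hx
  have hnochild : ∀ y ∈ V, y ≠ x → f y ≠ x := by
    intro y hy hyx
    by_cases hyr : y = r
    · subst hyr; rw [hfr]; exact fun hEq => hxr hEq.symm
    · exact hleaf y hy hyr
  have hmem' : ∀ y ∈ V.erase x, f y ∈ V.erase x := by
    intro y hy
    obtain ⟨hyx, hyV⟩ := Finset.mem_erase.1 hy
    exact Finset.mem_erase.2 ⟨hnochild y hyV hyx, hmem y hyV⟩
  have hupd : ∀ y ∈ V.erase x, Function.update f x x y = f y := by
    intro y hy
    exact Function.update_of_ne (Finset.mem_erase.1 hy).1 _ _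
  refine ⟨Finset.mem_erase.2 ⟨fun h => hxr h.symm, hr⟩, ?_, ?_, ?_, ?_, ?_⟩
  · intro y hy
    by_cases hyx : y = x
    · subst hyx; simp
    · rw [Function.update_of_ne hyx]
      exact hnorm y (fun hyV => hy (Finset.mem_erase.2 ⟨hyx, hyV⟩))
  · intro y hy; rw [hupd y hy]; exact hmem' y hy
  · rw [Function.update_of_ne (fun h => hxr h.symm)]; exact hfr
  · intro y hy hyr; rw [hupd y hy]
    exact hfne y (Finset.mem_erase.1 hy).2 hyr
  · intro y hy
    obtain ⟨m, hm⟩ := hreach y (Finset.mem_erase.1 hy).2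
    refine ⟨m, ?_⟩
    have hiter : ∀ y ∈ V.erase x, ∀ m, (Function.update f x x)^[m] y = f^[m] y :=
      fun y hy m => iterate_update_of_ne hmem' (Finset.notMem_erase x V) x m y hy
    rw [hiter y hy m]; exact hm

/-- Adding a leaf to a tree gives a tree. -/
theorem insert_leaf {W : Finset α} {r : α} {f : α → α} (h : IsTree W r f)
    {x a : α} (hx : x ∉ W) (ha : a ∈ W) :
    IsTree (insert x W) r (Function.update f x a) := by
  classical
  obtain ⟨hr, hnorm, hmem, hfr, hfne, hreach⟩ := h
  have hrx : r ≠ x := fun hEq => hx (hEq ▸ hr)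
  have hax : a ≠ x := fun hEq => hx (hEq ▸ ha)
  have hiter : ∀ y ∈ W, ∀ m, (Function.update f x a)^[m] y = f^[m] y :=
    fun y hy m => iterate_update_of_ne hmem hx a m y hy
  refine ⟨Finset.mem_insert_of_mem hr, ?_, ?_, ?_, ?_, ?_⟩
  · intro y hy
    rw [Finset.mem_insert, not_or] at hy
    rw [Function.update_of_ne hy.1]
    exact hnorm y hy.2
  · intro y hy
    rcases Finset.mem_insert.1 hy with hyx | hyW
    · subst hyx; simp [Finset.mem_insert_of_mem ha]
    · have : y ≠ x := fun hEq => hx (hEq ▸ hyW)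
      rw [Function.update_of_ne this]
      exact Finset.mem_insert_of_mem (hmem y hyW)
  · rw [Function.update_of_ne hrx]; exact hfr
  · intro y hy hyr
    rcases Finset.mem_insert.1 hy with hyx | hyW
    · subst hyx; simpa using hax
    · have : y ≠ x := fun hEq => hx (hEq ▸ hyW)
      rw [Function.update_of_ne this]
      exact hfne y hyW hyr
  · intro y hy
    rcases Finset.mem_insert.1 hy with hyx | hyW
    · subst hyx
      obtain ⟨m, hm⟩ := hreach a ha
      refine ⟨m + 1, ?_⟩
      rw [Function.iterate_succ_apply, Function.update_self, hiter a ha m]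
      exact hm
    · obtain ⟨m, hm⟩ := hreach y hyW
      exact ⟨m, by rw [hiter y hyW m]; exact hm⟩


def encodeAux : ℕ → Finset α → α → (α → α) → List α
  | 0, _, _, _ => []
  | m + 1, V, r, f =>
    match (leaves V r f).max with
    | none => []
    | some x => f x :: encodeAux m (V.erase x) r (Function.update f x x)

def decode (d : α) : Finset α → List α → α × (α → α)
  | V, [] => (V.max.getD d, id)
  | V, a :: t =>
    let x := (V \ (a :: t).toFinset).max.getD d
    let p := decode d (V.erase x) t
    (p.1, Function.update p.2 x a)

theorem decode_spec (d : α) (s : List α) : ∀ (V : Finset α), (∀ b ∈ s, b ∈ V) →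
    s.length + 1 = V.card →
    IsTree V (decode d V s).1 (decode d V s).2 ∧
    (∀ v, (V.filter fun y => y ≠ (decode d V s).1 ∧ (decode d V s).2 y = v).card = s.count v) ∧
    encodeAux (V.card - 1) V (decode d V s).1 (decode d V s).2 = s := by
  classical
  induction s with
  | nil =>
    intro V _ hlen
    simp only [List.length_nil, zero_add] at hlen
    obtain ⟨v, rfl⟩ := Finset.card_eq_one.1 hlen.symm
    have hdec : decode d {v} ([] : List α) = (v, id) := by
      simp [decode, Finset.max_singleton]
      rfl
    rw [hdec]
    refine ⟨⟨Finset.mem_singleton_self v, fun _ _ => rfl, ?_, rfl, ?_, ?_⟩, ?_, ?_⟩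
    · intro y hy; simpa using hy
    · intro y hy hyv; exact absurd (Finset.mem_singleton.1 hy) hyv
    · intro y hy; exact ⟨0, (Finset.mem_singleton.1 hy)⟩
    · intro w
      rw [Finset.filter_singleton]
      simp
    · simp [encodeAux]
  | cons a t ih =>
    intro V hmem hlen
    simp only [List.length_cons] at hlen
    have hsub : (a :: t).toFinset ⊆ V := fun v hv => hmem v (List.mem_toFinset.1 hv)
    have hXne : (V \ (a :: t).toFinset).Nonempty := by
      rw [Finset.sdiff_nonempty]
      intro hVsub
      have h1 := Finset.card_le_card hVsub
      have h2 := List.toFinset_card_le (a :: t)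
      simp only [List.length_cons] at h2
      omega
    set X := V \ (a :: t).toFinset with hXdef
    have hxmax : X.max = some (X.max' hXne) := (Finset.coe_max' hXne).symm
    set x := X.max.getD d with hxdef
    have hxX : x ∈ X := by rw [hxdef, hxmax]; exact Finset.max'_mem _ hXne
    have hxV : x ∈ V := (Finset.mem_sdiff.1 hxX).1
    have hxs : x ∉ (a :: t).toFinset := (Finset.mem_sdiff.1 hxX).2
    have hxa : a ≠ x := by
      intro hEq; exact hxs (by rw [← hEq]; simp)
    have hxt : x ∉ t := by
      intro hEq; exact hxs (by simp [hEq])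
    set W := V.erase x with hWdef
    have hWcard : W.card = t.length + 1 := by
      rw [hWdef, Finset.card_erase_of_mem hxV]; omega
    have hmemt : ∀ b ∈ t, b ∈ W := by
      intro b hb
      refine Finset.mem_erase.2 ⟨fun hEq => hxt (hEq ▸ hb), hmem b (List.mem_cons_of_mem a hb)⟩
    obtain ⟨htree, hcount, henc⟩ := ih W hmemt (by omega)
    set r := (decode d W t).1 with hrdef
    set f' := (decode d W t).2 with hfdef
    have hdec : decode d V (a :: t) = (r, Function.update f' x a) := by
      rw [decode]
    rw [hdec]
    have hrW : r ∈ W := htree.1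
    have hrx : r ≠ x := (Finset.mem_erase.1 hrW).1
    have haW : a ∈ W := Finset.mem_erase.2 ⟨hxa, hmem a (List.mem_cons_self)⟩
    set g := Function.update f' x a with hgdef
    have htreeV : IsTree V r g := by
      have := insert_leaf htree (Finset.notMem_erase x V) haW
      rwa [Finset.insert_erase hxV] at this
    have hVW : V = insert x W := (Finset.insert_erase hxV).symm
    have hcountV : ∀ v, (V.filter fun y => y ≠ r ∧ g y = v).card = (a :: t).count v := by
      intro v
      have hfilW : (W.filter fun y => y ≠ r ∧ g y = v) = W.filter fun y => y ≠ r ∧ f' y = v := by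
        apply Finset.filter_congr
        intro y hy
        have hyx : y ≠ x := (Finset.mem_erase.1 hy).1
        rw [hgdef, Function.update_of_ne hyx]
      have hxnW : x ∉ (W.filter fun y => y ≠ r ∧ g y = v) :=
        fun hmem' => Finset.notMem_erase x V (Finset.mem_of_mem_filter x hmem')
      rw [hVW, Finset.filter_insert]
      by_cases hav : a = v
      · rw [if_pos ⟨Ne.symm hrx, by rw [hgdef, Function.update_self]; exact hav⟩]
        rw [Finset.card_insert_of_notMem hxnW, hfilW, hcount v]
        simp [List.count_cons, hav]
      · rw [if_neg (by rw [hgdef, Function.update_self]; exact fun h => hav h.2)]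
        rw [hfilW, hcount v]
        simp [List.count_cons, hav]
    refine ⟨htreeV, hcountV, ?_⟩
    -- encode clause
    have hrchild : ∃ z ∈ V, z ≠ r ∧ g z = r := child_exists htreeV hxV (fun h => hrx h.symm)
    have hrin : r ∈ (a :: t) := by
      obtain ⟨z, hzV, hzr, hgz⟩ := hrchild
      have : 0 < (V.filter fun y => y ≠ r ∧ g y = r).card :=
        Finset.card_pos.2 ⟨z, Finset.mem_filter.2 ⟨hzV, hzr, hgz⟩⟩
      rw [hcountV r] at this
      exact List.count_pos_iff.1 this
    have hleaves : leaves V r g = X := by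
      ext v
      simp only [leaves, Finset.mem_filter, hXdef, Finset.mem_sdiff, List.mem_toFinset]
      constructor
      · rintro ⟨hvV, hvr, hnoch⟩
        refine ⟨hvV, fun hvs => ?_⟩
        have : 0 < (a :: t).count v := List.count_pos_iff.2 hvs
        rw [← hcountV v] at this
        obtain ⟨y, hy⟩ := Finset.card_pos.1 this
        obtain ⟨hyV, hyr, hgy⟩ := Finset.mem_filter.1 hy
        exact hnoch y hyV hyr hgy
      · rintro ⟨hvV, hvs⟩
        have hvr : v ≠ r := fun hEq => hvs (hEq ▸ hrin)
        refine ⟨hvV, hvr, fun y hyV hyr hgy => ?_⟩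
        have : 0 < (V.filter fun z => z ≠ r ∧ g z = v).card :=
          Finset.card_pos.2 ⟨y, Finset.mem_filter.2 ⟨hyV, hyr, hgy⟩⟩
        rw [hcountV v] at this
        exact hvs (List.count_pos_iff.1 this)
    have hVc : V.card - 1 = t.length + 1 := by omega
    rw [hVc, encodeAux, hleaves, hxmax]
    simp only []
    have hfx : f' x = x := htree.2.1 x (Finset.notMem_erase x V)
    have hgx : g (X.max' hXne) = a := by
      have : X.max' hXne = x := by rw [hxdef, hxmax]; rfl
      rw [this, hgdef, Function.update_self]
    have hupd : Function.update g (X.max' hXne) (X.max' hXne) = f' := by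
      have hx' : X.max' hXne = x := by rw [hxdef, hxmax]; rfl
      rw [hx', hgdef, Function.update_idem]
      rw [show Function.update f' x x = Function.update f' x (f' x) by rw [hfx]]
      exact Function.update_eq_self x f'
    have herase : V.erase (X.max' hXne) = W := by
      have hx' : X.max' hXne = x := by rw [hxdef, hxmax]; rfl
      rw [hx', hWdef]
    rw [hgx, hupd, herase]
    have : W.card - 1 = t.length := by omega
    rw [← this, henc]

theorem encode_spec (d : α) : ∀ (N : ℕ) (V : Finset α) (r : α) (f : α → α), V.card ≤ N →
    IsTree V r f →
    (∀ b ∈ encodeAux (V.card - 1) V r f, b ∈ V) ∧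
    (encodeAux (V.card - 1) V r f).length = V.card - 1 ∧
    (∀ v, (encodeAux (V.card - 1) V r f).count v = (V.filter fun y => y ≠ r ∧ f y = v).card) ∧
    decode d V (encodeAux (V.card - 1) V r f) = (r, f) := by
  classical
  intro N
  induction N with
  | zero =>
    intro V r f hcard htree
    have := Finset.card_pos.2 ⟨r, htree.1⟩
    omega
  | succ N ihN =>
    intro V r f hcard htree
    by_cases hV1 : V.card ≤ 1
    · -- singleton case
      have hr := htree.1
      have hc1 : V.card = 1 := le_antisymm hV1 (Finset.card_pos.2 ⟨r, hr⟩)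
      obtain ⟨v, hv⟩ := Finset.card_eq_one.1 hc1
      have hvr : v = r := by
        have := hr; rw [hv, Finset.mem_singleton] at this; exact this.symm
      rw [hvr] at hv
      have hE : encodeAux (V.card - 1) V r f = [] := by
        rw [hc1]; rfl
      rw [hE]
      refine ⟨by simp, by simp [hc1], ?_, ?_⟩
      · intro w
        rw [hv, Finset.filter_singleton]
        simp
      · have hfid : f = id := by
          funext y
          by_cases hyV : y ∈ V
          · rw [hv, Finset.mem_singleton] at hyV
            subst hyV; exact htree.2.2.2.1
          · exact htree.2.1 y hyV
        rw [decode, hv, Finset.max_singleton, hfid]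
        rfl
    · -- main case
      push_neg at hV1
      have herne : (V.erase r).Nonempty := by
        obtain ⟨b, hbV, hbr⟩ := Finset.exists_mem_ne hV1 r
        exact ⟨b, Finset.mem_erase.2 ⟨hbr, hbV⟩⟩
      have hlne : (leaves V r f).Nonempty := leaf_exists htree herne
      have hlmax : (leaves V r f).max = some ((leaves V r f).max' hlne) :=
        (Finset.coe_max' hlne).symm
      set x := (leaves V r f).max' hlne with hxdef
      have hxleaf : x ∈ leaves V r f := Finset.max'_mem _ hlne
      have hxV : x ∈ V := Finset.mem_of_mem_filter _ hxleaf
      have hxmf := Finset.mem_filter.1 hxleaf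
      have hxr : x ≠ r := hxmf.2.1
      have hnoch : ∀ y ∈ V, y ≠ r → f y ≠ x := hxmf.2.2
      set f₂ := Function.update f x x with hf2def
      set W := V.erase x with hWdef
      have htree' : IsTree W r f₂ := erase_leaf htree hxleaf
      have hWcard : W.card = V.card - 1 := Finset.card_erase_of_mem hxV
      have hE : encodeAux (V.card - 1) V r f = f x :: encodeAux (V.card - 2) W r f₂ := by
        rw [show V.card - 1 = (V.card - 2) + 1 by omega, encodeAux, hlmax]
      obtain ⟨ihmem, ihlen, ihcount, ihdec⟩ := ihN W r f₂ (by omega) htree'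
      rw [show W.card - 1 = V.card - 2 by omega] at ihmem ihlen ihcount ihdec
      set t' := encodeAux (V.card - 2) W r f₂ with ht'def
      have hVW : V = insert x W := (Finset.insert_erase hxV).symm
      have hxnW : x ∉ W := Finset.notMem_erase x V
      -- count clause
      have hcountV : ∀ v, (f x :: t').count v = (V.filter fun y => y ≠ r ∧ f y = v).card := by
        intro v
        have hfilW : (W.filter fun y => y ≠ r ∧ f y = v) = W.filter fun y => y ≠ r ∧ f₂ y = v := by
          apply Finset.filter_congr
          intro y hy
          rw [hf2def, Function.update_of_ne (Finset.mem_erase.1 hy).1]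
        have hxnfil : x ∉ (W.filter fun y => y ≠ r ∧ f y = v) :=
          fun hmem' => hxnW (Finset.mem_of_mem_filter x hmem')
        rw [hVW, Finset.filter_insert]
        by_cases hfv : f x = v
        · rw [if_pos ⟨hxr, hfv⟩, Finset.card_insert_of_notMem hxnfil, hfilW, ← ihcount v]
          simp [List.count_cons, hfv]
        · rw [if_neg (fun h => hfv h.2), hfilW, ← ihcount v]
          simp [List.count_cons]
          exact hfv
      -- decode clause
      have hrchild : ∃ z ∈ V, z ≠ r ∧ f z = r := child_exists htree hxV hxr
      have hrin : r ∈ (f x :: t') := by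
        obtain ⟨z, hzV, hzr, hfz⟩ := hrchild
        have : 0 < (V.filter fun y => y ≠ r ∧ f y = r).card :=
          Finset.card_pos.2 ⟨z, Finset.mem_filter.2 ⟨hzV, hzr, hfz⟩⟩
        rw [← hcountV r] at this
        exact List.count_pos_iff.1 this
      have hsdiff : V \ (f x :: t').toFinset = leaves V r f := by
        ext v
        simp only [leaves, Finset.mem_filter, Finset.mem_sdiff, List.mem_toFinset]
        constructor
        · rintro ⟨hvV, hvs⟩
          have hvr : v ≠ r := fun hEq => hvs (hEq ▸ hrin)
          refine ⟨hvV, hvr, fun y hyV hyr hfy => ?_⟩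
          have : 0 < (V.filter fun z => z ≠ r ∧ f z = v).card :=
            Finset.card_pos.2 ⟨y, Finset.mem_filter.2 ⟨hyV, hyr, hfy⟩⟩
          rw [← hcountV v] at this
          exact hvs (List.count_pos_iff.1 this)
        · rintro ⟨hvV, hvr, hnochv⟩
          refine ⟨hvV, fun hvs => ?_⟩
          have : 0 < (f x :: t').count v := List.count_pos_iff.2 hvs
          rw [hcountV v] at this
          obtain ⟨y, hy⟩ := Finset.card_pos.1 this
          obtain ⟨hyV, hyr, hfy⟩ := Finset.mem_filter.1 hy
          exact hnochv y hyV hyr hfy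
      have hdecE : decode d V (f x :: t') = (r, f) := by
        rw [decode]
        simp only [hsdiff, hlmax, ← hxdef]
        have hgetD : Option.getD (some x) d = x := rfl
        rw [hgetD, ← hWdef, ihdec]
        have hupd : Function.update f₂ x (f x) = f := by
          rw [hf2def, Function.update_idem, Function.update_eq_self]
        rw [hupd]
      rw [hE]
      refine ⟨?_, ?_, hcountV, hdecE⟩
      · intro b hb
        rcases List.mem_cons.1 hb with hbfx | hbt
        · rw [hbfx]; exact htree.2.2.1 x hxV
        · exact Finset.mem_of_mem_erase (ihmem b hbt)
      · simp only [List.length_cons, ihlen]; omega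

noncomputable def treeListEquiv (d : α) (V : Finset α) (hV : V.Nonempty) (c : α) (j : ℕ) :
    {p : α × (α → α) // IsTree V p.1 p.2 ∧
        (V.filter fun y => y ≠ p.1 ∧ p.2 y = c).card = j} ≃
      {s : List α // (∀ b ∈ s, b ∈ V) ∧ s.length = V.card - 1 ∧ s.count c = j} where
  toFun p := ⟨encodeAux (V.card - 1) V p.1.1 p.1.2, by
    obtain ⟨hmem, hlen, hcount, hdec⟩ := encode_spec d V.card V p.1.1 p.1.2 le_rfl p.2.1
    exact ⟨hmem, hlen, by rw [hcount c, p.2.2]⟩⟩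
  invFun s := ⟨decode d V s.1, by
    have hc := Finset.card_pos.2 hV
    obtain ⟨htree, hcount, henc⟩ := decode_spec d s.1 V s.2.1 (by omega)
    exact ⟨htree, by rw [hcount c, s.2.2.2]⟩⟩
  left_inv p := by
    apply Subtype.ext
    obtain ⟨hmem, hlen, hcount, hdec⟩ := encode_spec d V.card V p.1.1 p.1.2 le_rfl p.2.1
    simp only [hdec]
  right_inv s := by
    apply Subtype.ext
    have hc := Finset.card_pos.2 hV
    obtain ⟨htree, hcount, henc⟩ := decode_spec d s.1 V s.2.1 (by omega)
    exact henc

section Dipath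

variable {β : Type} {E : β → β → Prop}

theorem isDipath_append {a b y : β} {p : List β} (h : IsDipath E a b p) (he : E b y) :
    IsDipath E a y (p ++ [y]) := by
  induction p generalizing a with
  | nil => cases h; exact ⟨he, rfl⟩
  | cons c q ih => exact ⟨h.1, ih h.2⟩

theorem isDipath_last {a b : β} {p : List β} (h : IsDipath E a b p) (hne : p ≠ []) :
    ∃ q z, p = q ++ [b] ∧ IsDipath E a z q ∧ E z b := by
  induction p generalizing a with
  | nil => exact absurd rfl hne
  | cons c q ih =>
    obtain ⟨hac, hq⟩ := h
    cases q with
    | nil =>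
      cases hq
      exact ⟨[], a, rfl, rfl, hac⟩
    | cons c' q' =>
      obtain ⟨q'', z, heq, hpath, hedge⟩ := ih hq (by simp)
      exact ⟨c :: q'', z, by rw [heq]; rfl, ⟨hac, hpath⟩, hedge⟩

theorem isDipath_endpoint {a z z' : β} {p : List β} (h : IsDipath E a z p)
    (h' : IsDipath E a z' p) : z = z' := by
  induction p generalizing a with
  | nil => cases h; cases h'; rfl
  | cons c q ih => exact ih h.2 h'.2

end Dipath

section StepA

variable [Fintype α]

/-- The edge finset of a tree given by a parent function. -/
def pairFinset (r : α) (f : α → α) : Finset (α × α) :=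
  (Finset.univ.erase r).image fun x => (f x, x)

theorem mem_pairFinset {r : α} {f : α → α} {e : α × α} :
    e ∈ pairFinset r f ↔ e.2 ≠ r ∧ e.1 = f e.2 := by
  constructor
  · rintro he
    obtain ⟨x, hx, hxe⟩ := Finset.mem_image.1 he
    have hxr : x ≠ r := (Finset.mem_erase.1 hx).1
    cases hxe
    exact ⟨hxr, rfl⟩
  · rintro ⟨h2, h1⟩
    refine Finset.mem_image.2 ⟨e.2, Finset.mem_erase.2 ⟨h2, Finset.mem_univ _⟩, ?_⟩
    rw [← h1]

theorem pairFinset_span {r : α} {f : α → α} (h : IsTree Finset.univ r f) :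
    IsSpanningTreeFinset (fun x y => x ≠ y) (pairFinset r f) r := by
  obtain ⟨hr, hnorm, hmem, hfr, hfne, hreach⟩ := h
  set T := pairFinset r f with hT
  have hmemT : ∀ z y : α, (z, y) ∈ T ↔ y ≠ r ∧ z = f y := fun z y => mem_pairFinset
  constructor
  · rintro ⟨z, y⟩ he
    obtain ⟨h2, h1⟩ := (hmemT z y).1 he
    simp only
    rw [h1]
    exact fun hEq => hfne y (Finset.mem_univ y) h2 hEq
  · intro x
    -- existence
    have hexist : ∀ (m : ℕ) (x : α), f^[m] x = r → ∃ p, IsDipath (edgeRel T) r x p := by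
      intro m
      induction m with
      | zero =>
        intro x hx
        exact ⟨[], by simpa [IsDipath] using hx.symm⟩
      | succ m ih =>
        intro x hx
        by_cases hxr : x = r
        · exact ⟨[], hxr.symm⟩
        · rw [Function.iterate_succ_apply] at hx
          obtain ⟨p, hp⟩ := ih (f x) hx
          refine ⟨p ++ [x], isDipath_append hp ?_⟩
          exact (hmemT (f x) x).2 ⟨hxr, rfl⟩
    -- uniqueness
    have huniq : ∀ (L : ℕ) (p q : List α) (x : α), p.length ≤ L →
        IsDipath (edgeRel T) r x p → IsDipath (edgeRel T) r x q → p = q := by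
      intro L
      induction L with
      | zero =>
        intro p q x hlen hp hq
        have hp0 : p = [] := List.length_eq_zero_iff.1 (by omega)
        subst hp0
        cases hp
        cases q with
        | nil => rfl
        | cons c q' =>
          obtain ⟨q'', z, _, _, hedge⟩ := isDipath_last hq (by simp)
          exact absurd ((hmemT z r).1 hedge).1 (by simp)
      | succ L ih =>
        intro p q x hlen hp hq
        cases p with
        | nil =>
          cases hp
          cases q with
          | nil => rfl
          | cons c q' =>
            obtain ⟨q'', z, _, _, hedge⟩ := isDipath_last hq (by simp)
            exact absurd ((hmemT z r).1 hedge).1 (by simp)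
        | cons c p' =>
          have hxr : x ≠ r := by
            intro hEq
            subst hEq
            obtain ⟨q'', z, _, _, hedge⟩ := isDipath_last hp (by simp)
            exact absurd ((hmemT z x).1 hedge).1 (by simp)
          cases q with
          | nil =>
            cases hq
            exact absurd rfl hxr
          | cons e q' =>
            obtain ⟨p₁, z₁, hpeq, hppath, hpedge⟩ := isDipath_last hp (by simp)
            obtain ⟨q₁, z₂, hqeq, hqpath, hqedge⟩ := isDipath_last hq (by simp)
            have hz₁ : z₁ = f x := ((hmemT z₁ x).1 hpedge).2
            have hz₂ : z₂ = f x := ((hmemT z₂ x).1 hqedge).2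
            subst hz₁
            rw [hz₂] at hqpath
            have hlen₁ : p₁.length ≤ L := by
              have : p₁.length + 1 = (c :: p').length := by rw [hpeq]; simp
              simp only [List.length_cons] at this hlen
              omega
            have := ih p₁ q₁ (f x) hlen₁ hppath hqpath
            rw [hpeq, hqeq, this]
    obtain ⟨p, hp⟩ := hexist (hreach x (Finset.mem_univ x)).choose x
      (hreach x (Finset.mem_univ x)).choose_spec
    exact ⟨p, hp, fun q hq => huniq q.length q p x le_rfl hq hp⟩

theorem pairFinset_outDeg (r : α) (f : α → α) (c : α) :
    outDeg (pairFinset r f) c = (Finset.univ.filter fun y => y ≠ r ∧ f y = c).card := by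
  classical
  rw [outDeg]
  have himg : (pairFinset r f).filter (fun e => e.1 = c) =
      (Finset.univ.filter fun y => y ≠ r ∧ f y = c).image fun x => (f x, x) := by
    ext e
    simp only [Finset.mem_filter, Finset.mem_image, mem_pairFinset, Finset.mem_univ, true_and]
    constructor
    · rintro ⟨⟨h2, h1⟩, hc⟩
      exact ⟨e.2, ⟨h2, by rw [← h1]; exact hc⟩, by rw [← h1]⟩
    · rintro ⟨x, ⟨hxr, hfx⟩, hxe⟩
      cases hxe
      exact ⟨⟨hxr, rfl⟩, hfx⟩
  rw [himg, Finset.card_image_of_injective _ (fun x y h => (Prod.ext_iff.1 h).2)]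

theorem span_exists_tree {T : Finset (α × α)} {r : α}
    (hspan : IsSpanningTreeFinset (fun x y => x ≠ y) T r) :
    ∃ f, IsTree Finset.univ r f ∧ pairFinset r f = T := by
  classical
  obtain ⟨hedges, hpath⟩ := hspan
  have noin_r : ∀ z, (z, r) ∉ T := by
    intro z hz
    obtain ⟨p, hp, -⟩ := hpath z
    have h1 : IsDipath (edgeRel T) r r (p ++ [r]) := isDipath_append hp hz
    have h2 : IsDipath (edgeRel T) r r [] := rfl
    have := ((hpath r).unique h1 h2)
    simp at this
  have hex : ∀ x, x ≠ r → ∃ z, (z, x) ∈ T := by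
    intro x hxr
    obtain ⟨p, hp, -⟩ := hpath x
    have hpne : p ≠ [] := by
      intro h
      subst h
      exact hxr hp.symm
    obtain ⟨q, z, -, -, hedge⟩ := isDipath_last hp hpne
    exact ⟨z, hedge⟩
  set f : α → α := fun x => if h : x = r then r else (hex x h).choose with hfdef
  have hfr : f r = r := by simp [hfdef]
  have hedgef : ∀ x, x ≠ r → (f x, x) ∈ T := by
    intro x h
    simp only [hfdef, dif_neg h]
    exact (hex x h).choose_spec
  have huniq_in : ∀ (x z z' : α), (z, x) ∈ T → (z', x) ∈ T → z = z' := by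
    intro x z z' hz hz'
    obtain ⟨p, hp, -⟩ := hpath z
    obtain ⟨p', hp', -⟩ := hpath z'
    have heq := (hpath x).unique (isDipath_append hp hz) (isDipath_append hp' hz')
    have hpp : p = p' := List.append_cancel_right heq
    exact isDipath_endpoint hp (hpp ▸ hp')
  have hfeq : ∀ x z, (z, x) ∈ T → z = f x := by
    intro x z hz
    have hxr : x ≠ r := fun h => noin_r z (h ▸ hz)
    exact huniq_in x z (f x) hz (hedgef x hxr)
  have hreach : ∀ x, ∃ m, f^[m] x = r := by
    have key : ∀ (p : List α) (a x : α), IsDipath (edgeRel T) a x p → f^[p.length] x = a := by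
      intro p
      induction p with
      | nil => intro a x h; exact h.symm
      | cons cc q ih =>
        intro a x h
        obtain ⟨hac, hq⟩ := h
        have : f^[q.length] x = cc := ih cc x hq
        rw [List.length_cons, Function.iterate_succ_apply', this]
        exact (hfeq cc a hac).symm
    intro x
    obtain ⟨p, hp, -⟩ := hpath x
    exact ⟨p.length, key p r x hp⟩
  refine ⟨f, ⟨Finset.mem_univ r, fun x hx => absurd (Finset.mem_univ x) hx,
    fun x _ => Finset.mem_univ _, hfr, ?_, fun x _ => hreach x⟩, ?_⟩
  · intro x _ hxr
    exact fun hEq => hedges (f x, x) (hedgef x hxr) hEq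
  · ext e
    rw [mem_pairFinset]
    constructor
    · rintro ⟨h2, h1⟩
      have heta : e = (f e.2, e.2) := Prod.ext h1 rfl
      rw [heta]
      exact hedgef e.2 h2
    · intro he
      have heta : (e.1, e.2) = e := rfl
      have h2 : e.2 ≠ r := by
        intro h
        exact noin_r e.1 (by rw [← h, heta]; exact he)
      exact ⟨h2, hfeq e.2 e.1 (by rw [heta]; exact he)⟩

theorem pairFinset_inj {r r' : α} {f f' : α → α} (h : IsTree Finset.univ r f)
    (h' : IsTree Finset.univ r' f') (heq : pairFinset r f = pairFinset r' f') :
    r = r' ∧ f = f' := by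
  have hrr : r = r' := by
    by_contra hne
    have hmem : (f' r, r) ∈ pairFinset r' f' :=
      mem_pairFinset.2 ⟨hne, rfl⟩
    rw [← heq] at hmem
    exact (mem_pairFinset.1 hmem).1 rfl
  subst hrr
  refine ⟨rfl, funext fun x => ?_⟩
  by_cases hxr : x = r
  · subst hxr
    rw [h.2.2.2.1, h'.2.2.2.1]
  · have hmem : (f x, x) ∈ pairFinset r f := mem_pairFinset.2 ⟨hxr, rfl⟩
    rw [heq] at hmem
    exact (mem_pairFinset.1 hmem).2

noncomputable def finsetPairEquiv (c : α) (j : ℕ) :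
    {p : α × (α → α) // IsTree Finset.univ p.1 p.2 ∧
        (Finset.univ.filter fun y => y ≠ p.1 ∧ p.2 y = c).card = j} ≃
      {T : Finset (α × α) // (∃ r, IsSpanningTreeFinset (fun x y => x ≠ y) T r) ∧
        outDeg T c = j} :=
  Equiv.ofBijective (fun p => ⟨pairFinset p.1.1 p.1.2, ⟨p.1.1, pairFinset_span p.2.1⟩,
      by rw [pairFinset_outDeg]; exact p.2.2⟩) (by
    constructor
    · rintro ⟨⟨r, f⟩, hp⟩ ⟨⟨r', f'⟩, hp'⟩ hEq
      simp only [Subtype.mk.injEq] at hEq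
      obtain ⟨h1, h2⟩ := pairFinset_inj hp.1 hp'.1 hEq
      exact Subtype.ext (Prod.ext h1 h2)
    · rintro ⟨T, ⟨⟨r, hspan⟩, hdeg⟩⟩
      obtain ⟨f, htree, hTf⟩ := span_exists_tree hspan
      refine ⟨⟨(r, f), htree, ?_⟩, ?_⟩
      · rw [← pairFinset_outDeg r f c, hTf]
        exact hdeg
      · exact Subtype.ext hTf)

end StepA

section ListCount

variable [Fintype α]

instance listSubtypeFinite (m j : ℕ) (c : α) :
    Finite {s : List α // s.length = m ∧ s.count c = j} := by
  have hfin : Finite {l : List α // l.length = m} :=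
    (Finite.of_fintype (List.Vector α m) : Finite (List.Vector α m))
  refine Finite.of_injective
    (fun s => (⟨s.1, s.2.1⟩ : {l : List α // l.length = m})) ?_
  intro s t h
  apply Subtype.ext
  have := congrArg Subtype.val h
  simpa using this

def consEquiv (c : α) (m j : ℕ) :
    {s : List α // s.length = m + 1 ∧ s.count c = j} ≃
      {x : α × List α // x.2.length = m ∧ (x.1 :: x.2).count c = j} where
  toFun s := ⟨(s.1.head (by
      intro h
      have := s.2.1
      rw [h] at this
      simp at this), s.1.tail), by
    have hne : s.1 ≠ [] := by
      intro h
      have := s.2.1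
      rw [h] at this
      simp at this
    have hcons := List.cons_head_tail hne
    constructor
    · show s.1.tail.length = m
      have := s.2.1
      have hlt := List.length_tail (l := s.1)
      omega
    · show ((s.1.head hne) :: s.1.tail).count c = _
      rw [hcons]
      exact s.2.2⟩
  invFun x := ⟨x.1.1 :: x.1.2, by simp [x.2.1], x.2.2⟩
  left_inv s := Subtype.ext (List.cons_head_tail _)
  right_inv x := rfl

def zeroCountEquiv (c : α) (m : ℕ) :
    {x : α × List α // x.2.length = m ∧ (x.1 :: x.2).count c = 0} ≃
      ({b : α // b ≠ c} × {s : List α // s.length = m ∧ s.count c = 0}) where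
  toFun x := (⟨x.1.1, by
      have h2 := x.2.2
      intro h
      simp [List.count_cons, h] at h2⟩,
    ⟨x.1.2, x.2.1, by
      have h2 := x.2.2
      by_cases hh : x.1.1 = c
      · simp [List.count_cons, hh] at h2
      · simpa [List.count_cons, hh] using h2⟩)
  invFun bt := ⟨(bt.1.1, bt.2.1), bt.2.2.1, by
    simp [List.count_cons, bt.2.2.2, bt.1.2]⟩
  left_inv x := rfl
  right_inv bt := rfl

def succCountEquiv (c : α) (m j : ℕ) :
    {x : α × List α // x.2.length = m ∧ (x.1 :: x.2).count c = j + 1} ≃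
      ({s : List α // s.length = m ∧ s.count c = j} ⊕
        ({b : α // b ≠ c} × {s : List α // s.length = m ∧ s.count c = j + 1})) where
  toFun x :=
    if h : x.1.1 = c then
      Sum.inl ⟨x.1.2, x.2.1, by
        have := x.2.2
        simp [List.count_cons, h] at this
        omega⟩
    else
      Sum.inr (⟨x.1.1, h⟩, ⟨x.1.2, x.2.1, by
        have h2 := x.2.2
        simpa [List.count_cons, h] using h2⟩)
  invFun y :=
    match y with
    | Sum.inl t => ⟨(c, t.1), t.2.1, by simp [List.count_cons, t.2.2]⟩
    | Sum.inr bt => ⟨(bt.1.1, bt.2.1), bt.2.2.1, by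
        simp [List.count_cons, bt.2.2.2, bt.1.2]⟩
  left_inv x := by
    by_cases h : x.1.1 = c
    · simp only [dif_pos h]
      exact Subtype.ext (Prod.ext h.symm rfl)
    · simp only [dif_neg h]
  right_inv y := by
    match y with
    | Sum.inl t => simp
    | Sum.inr bt => simp [dif_neg bt.1.2]

theorem card_ne (c : α) : Nat.card {b : α // b ≠ c} = Fintype.card α - 1 := by
  rw [Nat.card_eq_fintype_card]
  have := Fintype.card_subtype_compl (fun b : α => b = c)
  rw [Fintype.card_subtype_eq] at this
  exact this

theorem card_count_lists (c : α) :
    ∀ m j : ℕ, Nat.card {s : List α // s.length = m ∧ s.count c = j} =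
      m.choose j * (Fintype.card α - 1) ^ (m - j) := by
  intro m
  induction m with
  | zero =>
    intro j
    match j with
    | 0 =>
      have : ∀ s : {s : List α // s.length = 0 ∧ s.count c = 0}, s = ⟨[], by simp⟩ := by
        intro s
        exact Subtype.ext (List.length_eq_zero_iff.1 s.2.1)
      rw [Nat.card_eq_one_iff_unique.2 ⟨⟨fun a b => (this a).trans (this b).symm⟩, ⟨⟨[], by simp⟩⟩⟩]
      simp
    | j + 1 =>
      have he : IsEmpty {s : List α // s.length = 0 ∧ s.count c = j + 1} := by
        refine ⟨fun s => ?_⟩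
        have h1 := s.2.1
        have h2 := s.2.2
        have := (List.count_le_length (a := c) (l := s.1))
        omega
      rw [Nat.card_of_isEmpty]
      simp
  | succ m ih =>
    intro j
    match j with
    | 0 =>
      rw [Nat.card_congr ((consEquiv c m 0).trans (zeroCountEquiv c m)), Nat.card_prod,
        card_ne, ih 0]
      simp [pow_succ]
      ring
    | j + 1 =>
      rw [Nat.card_congr ((consEquiv c m (j + 1)).trans (succCountEquiv c m j)),
        Nat.card_sum, Nat.card_prod, card_ne, ih j, ih (j + 1)]
      rw [Nat.choose_succ_succ]
      rcases lt_or_ge j m with hjm | hjm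
      · rw [show m + 1 - (j + 1) = m - j by omega, show m - j = (m - (j + 1)) + 1 by omega,
          pow_succ]
        ring
      · have h0 : m.choose (j + 1) = 0 := Nat.choose_eq_zero_of_lt (by omega)
        rw [h0]
        simp

theorem card_univ_lists (c : α) (j : ℕ) :
    Nat.card {s : List α // (∀ b ∈ s, b ∈ (Finset.univ : Finset α)) ∧
        s.length = (Finset.univ : Finset α).card - 1 ∧ s.count c = j} =
      (Fintype.card α - 1).choose j * (Fintype.card α - 1) ^ (Fintype.card α - 1 - j) := by
  rw [Nat.card_congr (Equiv.subtypeEquivRight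
      (q := fun s : List α => s.length = Fintype.card α - 1 ∧ s.count c = j)
      (by intro s; simp [Finset.card_univ]))]
  exact card_count_lists c _ j

end ListCount

end TreeCount

/-- For the complete directed graph `G_n` on `n` vertices, the number of spanning directed
rooted trees `T` with `d_T(c) = n - 1 - k` for a fixed vertex `c` equals
`(n-1).choose k * (n-1)^k`. -/
theorem numSpanningTreesWithOutdeg (n k : ℕ) (hn : 1 ≤ n) (hk : k ≤ n - 1) (c : Fin n) :
    Nat.card {T : Finset (Fin n × Fin n) //
        (∃ r : Fin n, IsSpanningTreeFinset (fun x y => x ≠ y) T r) ∧ outDeg T c = n - 1 - k} =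
      Nat.choose (n - 1) k * (n - 1) ^ k := by
  classical
  haveI : Nonempty (Fin n) := ⟨c⟩
  set j := n - 1 - k with hj
  have e1 := (TreeCount.finsetPairEquiv (α := Fin n) c j).symm
  have e2 := TreeCount.treeListEquiv (α := Fin n) c Finset.univ Finset.univ_nonempty c j
  have hcard := Nat.card_congr (e1.trans e2)
  refine Eq.trans (Eq.trans ?_ hcard) ?_
  · congr!
  rw [TreeCount.card_univ_lists, Fintype.card_fin]
  rw [show (n - 1) - (n - 1 - k) = k from by omega, Nat.choose_symm hk]
end

section
/- Let D be a directed graph with a complete source c, and let T be a spanning directed rooted tree of D with root r in which c is not the root. Let x be the unique vertex with edge x→y in T for some vertex y ≠ r with x ≠ c. If c is not below y in T, then T with edge x→y replaced by c→y is again a spanning directed rooted tree of D. -/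
/-- `u` is below `v` in the rooted tree `T`: there is a directed path from `v` to `u`. -/
def Below {V : Type} (T : V → V → Prop) (u v : V) : Prop :=
  ∃ p : List V, IsDipath T v u p

theorem dipath_append {V : Type} (R : V → V → Prop) (p : List V) :
    ∀ (q : List V) (a b : V),
      IsDipath R a b (p ++ q) ↔ ∃ m, IsDipath R a m p ∧ IsDipath R m b q := by
  induction p with
  | nil =>
    intro q a b
    constructor
    · intro h; exact ⟨a, rfl, h⟩
    · rintro ⟨m, h1, h2⟩; cases h1; exact h2
  | cons d p ih =>
    intro q a b
    constructor
    · rintro ⟨h, hrest⟩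
      obtain ⟨m, h1, h2⟩ := (ih q d b).mp hrest
      exact ⟨m, ⟨h, h1⟩, h2⟩
    · rintro ⟨m, ⟨h, h1⟩, h2⟩
      exact ⟨h, (ih q d b).mpr ⟨m, h1, h2⟩⟩

theorem dipath_end {V : Type} (R : V → V → Prop) (p : List V) :
    ∀ a b b', IsDipath R a b p → IsDipath R a b' p → b = b' := by
  induction p with
  | nil => intro a b b' h h'; exact h.symm.trans h'
  | cons d p ih => intro a b b' h h'; exact ih d b b' h.2 h'.2

theorem dipath_mono {V : Type} {R R' : V → V → Prop} (p : List V) :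
    ∀ (a b : V), (∀ u v, v ∈ p → R u v → R' u v) →
      IsDipath R a b p → IsDipath R' a b p := by
  induction p with
  | nil => intro a b _ h; exact h
  | cons d p ih =>
    intro a b hsub h
    exact ⟨hsub a d List.mem_cons_self h.1,
      ih d b (fun u v hv => hsub u v (List.mem_cons_of_mem _ hv)) h.2⟩

theorem dipath_uniq {V : Type} (R : V → V → Prop) (r : V)
    (hpar : ∀ z w w', R w z → R w' z → w = w')
    (hr : ∀ w, ¬ R w r) (p : List V) :
    ∀ (p' : List V) (z : V), IsDipath R r z p → IsDipath R r z p' → p = p' := by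
  induction p using List.reverseRecOn with
  | nil =>
    intro p' z h h'
    rcases p'.eq_nil_or_concat with h0 | ⟨q, d, rfl⟩
    · exact h0.symm
    · exfalso
      rw [List.concat_eq_append] at h'
      obtain ⟨m, -, hm⟩ := (dipath_append R q [d] r z).mp h'
      have hd : d = z := hm.2
      cases h; cases hd
      exact hr m hm.1
  | append_singleton q d ih =>
    intro p' z h h'
    obtain ⟨m, hq, hm⟩ := (dipath_append R q [d] r z).mp h
    have hdz : d = z := hm.2
    rcases p'.eq_nil_or_concat with rfl | ⟨q', d', rfl⟩
    · exfalso; cases h'; cases hdz; exact hr m hm.1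
    · rw [List.concat_eq_append] at h' ⊢
      obtain ⟨m', hq', hm'⟩ := (dipath_append R q' [d'] r z).mp h'
      have hdz' : d' = z := hm'.2
      cases hdz; cases hdz'
      have : m = m' := hpar d m m' hm.1 hm'.1
      cases this
      rw [ih q' m hq hq']

/-- Let `D` (edge relation `E`) have a complete source `c`, let `T` be a spanning directed
rooted tree with root `r` in which `c` is not the root, and let `x → y` be an edge of `T`
with `y ≠ r` and `x ≠ c`.  If `c` is not below `y` in `T`, then replacing the edge `x → y`
by `c → y` again yields a spanning directed rooted tree of `D` (with root `r`). -/
theorem exchange_not_below {V : Type} (E T : V → V → Prop) (c r x y : V)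
    (hsource : ∀ z : V, z ≠ c → E c z)
    (hT : IsSpanningDitree E T r) (hcr : c ≠ r)
    (hxy : T x y) (hyr : y ≠ r) (hxc : x ≠ c)
    (hbelow : ¬ Below T c y) :
    IsSpanningDitree E (fun a b => (T a b ∧ ¬(a = x ∧ b = y)) ∨ (a = c ∧ b = y)) r := by
  classical
  obtain ⟨hTE, hTpath⟩ := hT
  set T' : V → V → Prop := fun a b => (T a b ∧ ¬(a = x ∧ b = y)) ∨ (a = c ∧ b = y) with hT'def
  -- y ≠ c
  have hyc : y ≠ c := by
    intro h
    exact hbelow ⟨[], h⟩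
  -- suffix lemma
  have hsuf : ∀ (p : List V) (a b : V), y ∈ p → IsDipath T a b p →
      ∃ t : List V, IsDipath T y b t := by
    intro p a b hv hp
    obtain ⟨s, t, rfl⟩ := List.append_of_mem hv
    obtain ⟨m, -, hm⟩ := (dipath_append T s (y :: t) a b).mp hp
    exact ⟨t, hm.2⟩
  -- parent uniqueness in T
  have hparT : ∀ z w w', T w z → T w' z → w = w' := by
    intro z w w' h h'
    obtain ⟨pw, hpw, -⟩ := hTpath w
    obtain ⟨pw', hpw', -⟩ := hTpath w'
    obtain ⟨pz, -, huz⟩ := hTpath z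
    have h1 : IsDipath T r z (pw ++ [z]) :=
      (dipath_append T pw [z] r z).mpr ⟨w, hpw, h, rfl⟩
    have h2 : IsDipath T r z (pw' ++ [z]) :=
      (dipath_append T pw' [z] r z).mpr ⟨w', hpw', h', rfl⟩
    have heq : pw ++ [z] = pw' ++ [z] := (huz _ h1).trans (huz _ h2).symm
    have hpp : pw = pw' := by simpa using heq
    subst hpp
    exact dipath_end T pw r w w' hpw hpw'
  -- no in-edge at r in T
  have hnoR : ∀ w, ¬ T w r := by
    intro w hw
    obtain ⟨pw, hpw, -⟩ := hTpath w
    obtain ⟨pr, -, hur⟩ := hTpath r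
    have h1 : IsDipath T r r (pw ++ [r]) :=
      (dipath_append T pw [r] r r).mpr ⟨w, hpw, hw, rfl⟩
    have h2 : IsDipath T r r [] := rfl
    have heq : pw ++ [r] = ([] : List V) := (hur _ h1).trans (hur _ h2).symm
    simp at heq
  -- parent uniqueness in T'
  have hparT' : ∀ z w w', T' w z → T' w' z → w = w' := by
    intro z w w' h h'
    rcases h with ⟨h, hn⟩ | ⟨hc, hy⟩
    · rcases h' with ⟨h', hn'⟩ | ⟨hc', hy'⟩
      · exact hparT z w w' h h'
      · exact absurd ⟨hparT y w x (hy' ▸ h) hxy, hy'⟩ hn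
    · rcases h' with ⟨h', hn'⟩ | ⟨hc', -⟩
      · exact absurd ⟨hparT y w' x (hy ▸ h') hxy, hy⟩ hn'
      · exact hc.trans hc'.symm
  -- no in-edge at r in T'
  have hnoR' : ∀ w, ¬ T' w r := by
    rintro w (⟨h, -⟩ | ⟨-, h⟩)
    · exact hnoR w h
    · exact hyr h.symm
  -- path from r to c in T'
  have hpcT' : ∃ pc : List V, IsDipath T' r c pc := by
    obtain ⟨pc, hpc, -⟩ := hTpath c
    have hy : y ∉ pc := fun hy => hbelow (hsuf pc r c hy hpc)
    refine ⟨pc, dipath_mono pc r c ?_ hpc⟩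
    intro u v hv hTuv
    exact Or.inl ⟨hTuv, fun hh => hy (hh.2 ▸ hv)⟩
  -- existence of T'-paths
  have hex : ∀ z, ∃ p : List V, IsDipath T' r z p := by
    intro z
    by_cases hz : ∃ q : List V, IsDipath T y z q
    · obtain ⟨q, hq⟩ := hz
      have hyq : y ∉ q := by
        intro hy
        obtain ⟨s, t, rfl⟩ := List.append_of_mem hy
        obtain ⟨m, hs, hm⟩ := (dipath_append T s (y :: t) y z).mp hq
        obtain ⟨py, hpy, huy⟩ := hTpath y
        have h1 : IsDipath T r y (py ++ (s ++ [y])) :=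
          (dipath_append T py (s ++ [y]) r y).mpr
            ⟨y, hpy, (dipath_append T s [y] y y).mpr ⟨m, hs, hm.1, rfl⟩⟩
        have heq : py ++ (s ++ [y]) = py := (huy _ h1).trans (huy _ hpy).symm
        have := congrArg List.length heq
        simp at this
      obtain ⟨pc, hpc⟩ := hpcT'
      refine ⟨pc ++ y :: q, (dipath_append T' pc (y :: q) r z).mpr ⟨c, hpc, ?_, ?_⟩⟩
      · exact Or.inr ⟨rfl, rfl⟩
      · refine dipath_mono q y z ?_ hq
        intro u v hv hTuv
        exact Or.inl ⟨hTuv, fun hh => hyq (hh.2 ▸ hv)⟩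
    · obtain ⟨pz, hpz, -⟩ := hTpath z
      have hy : y ∉ pz := fun hy => hz (hsuf pz r z hy hpz)
      refine ⟨pz, dipath_mono pz r z ?_ hpz⟩
      intro u v hv hTuv
      exact Or.inl ⟨hTuv, fun hh => hy (hh.2 ▸ hv)⟩
  constructor
  · rintro a b (⟨h, -⟩ | ⟨ha, hb⟩)
    · exact hTE a b h
    · rw [ha, hb]; exact hsource y hyc
  · intro z
    obtain ⟨p, hp⟩ := hex z
    exact ⟨p, hp, fun p' hp' => dipath_uniq T' r hparT' hnoR' p' p z hp' hp⟩
end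

section
/- Let D be a directed graph with a complete source c, let T be a spanning directed rooted tree of D with root r, and let x→y be an edge of T with x ≠ c such that c is below y in T. Then T with edge x→y replaced by c→r is again a spanning directed rooted tree of D. -/
theorem isDipath_append {V : Type} {T : V → V → Prop} :
    ∀ (p : List V) {a b : V}, IsDipath T a b p →
      ∀ {q : List V} {d : V}, IsDipath T b d q → IsDipath T a d (p ++ q) := by
  intro p
  induction p with
  | nil =>
    intro a b h q d h2
    have h' : a = b := h
    subst h'
    exact h2
  | cons w p ih =>
    intro a b h q d h2
    exact ⟨h.1, ih h.2 h2⟩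

theorem isDipath_concat {V : Type} {T : V → V → Prop} :
    ∀ (p : List V) (a b w : V),
      IsDipath T a b (p ++ [w]) ↔ w = b ∧ ∃ m, IsDipath T a m p ∧ T m b := by
  intro p
  induction p with
  | nil =>
    intro a b w
    constructor
    · rintro ⟨h1, h2⟩
      have h2' : w = b := h2
      exact ⟨h2', a, rfl, h2' ▸ h1⟩
    · rintro ⟨rfl, m, hm, hmb⟩
      have hm' : a = m := hm
      exact ⟨hm' ▸ hmb, rfl⟩
  | cons u p ih =>
    intro a b w
    constructor
    · rintro ⟨h1, h2⟩
      obtain ⟨rfl, m, hm, hmb⟩ := (ih u b w).mp h2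
      exact ⟨rfl, m, ⟨h1, hm⟩, hmb⟩
    · rintro ⟨rfl, m, ⟨h1, hm⟩, hmb⟩
      exact ⟨h1, (ih u w w).mpr ⟨rfl, m, hm, hmb⟩⟩

theorem isDipath_end_unique {V : Type} {T : V → V → Prop} :
    ∀ (p : List V) (a b b' : V), IsDipath T a b p → IsDipath T a b' p → b = b' := by
  intro p
  induction p with
  | nil =>
    intro a b b' h h'
    exact (show a = b from h).symm.trans (show a = b' from h')
  | cons u p ih =>
    intro a b b' h h'
    exact ih u b b' h.2 h'.2

theorem dipath_unique {V : Type} {S : V → V → Prop} {a : V}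
    (hroot : ∀ u, ¬ S u a) (hin : ∀ u v z, S u z → S v z → u = v) :
    ∀ (n : ℕ) (p q : List V) (z : V), p.length + q.length ≤ n →
      IsDipath S a z p → IsDipath S a z q → p = q := by
  intro n
  induction n with
  | zero =>
    intro p q z hlen hp hq
    have hp0 : p = [] := List.length_eq_zero_iff.mp (by omega)
    have hq0 : q = [] := List.length_eq_zero_iff.mp (by omega)
    rw [hp0, hq0]
  | succ n ih =>
    intro p q z hlen hp hq
    rcases List.eq_nil_or_concat p with rfl | ⟨p', w, rfl⟩
    · have hz : a = z := hp
      subst hz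
      rcases List.eq_nil_or_concat q with rfl | ⟨q', w, rfl⟩
      · rfl
      · exfalso
        rw [List.concat_eq_append, isDipath_concat] at hq
        obtain ⟨_, m, _, hm⟩ := hq
        exact hroot m hm
    · rcases List.eq_nil_or_concat q with rfl | ⟨q', w', rfl⟩
      · exfalso
        have hz : a = z := hq
        subst hz
        rw [List.concat_eq_append, isDipath_concat] at hp
        obtain ⟨_, m, _, hm⟩ := hp
        exact hroot m hm
      · rw [List.concat_eq_append, isDipath_concat] at hp hq
        obtain ⟨rfl, m, hpm, hmz⟩ := hp
        obtain ⟨hw', m', hqm, hm'z⟩ := hq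
        have hmm : m = m' := hin m m' w hmz hm'z
        subst hmm
        have hpq : p' = q' := ih p' q' m (by simp at hlen ⊢; omega) hpm hqm
        rw [List.concat_eq_append, List.concat_eq_append, hpq, hw']

/-- Let `D` (edge relation `E`) have a complete source `c`, let `T` be a spanning directed
rooted tree with root `r`, and let `x → y` be an edge of `T` with `x ≠ c` such that `c` is
below `y` in `T`.  Then replacing the edge `x → y` by `c → r` again yields a spanning
directed rooted tree of `D` (with root `y`). -/
theorem exchange_below {V : Type} (E T : V → V → Prop) (c r x y : V)
    (hsource : ∀ z : V, z ≠ c → E c z)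
    (hT : IsSpanningDitree E T r)
    (hxy : T x y) (hxc : x ≠ c)
    (hbelow : Below T c y) :
    IsSpanningDitree E (fun a b => (T a b ∧ ¬(a = x ∧ b = y)) ∨ (a = c ∧ b = r)) y := by
  obtain ⟨hE, huniq⟩ := hT
  set T' : V → V → Prop :=
    fun a b => (T a b ∧ ¬(a = x ∧ b = y)) ∨ (a = c ∧ b = r) with hT'def
  have hpath : ∀ z, ∃ p, IsDipath T r z p := fun z => (huniq z).exists
  have hTuniq : ∀ z (p q : List V), IsDipath T r z p → IsDipath T r z q → p = q :=
    fun z p q hp hq => (huniq z).unique hp hq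
  -- no nonempty cycles in T
  have hnocyc : ∀ z (p : List V), p ≠ [] → ¬ IsDipath T z z p := by
    intro z p hne hcyc
    obtain ⟨q, hq⟩ := hpath z
    have h2 : IsDipath T r z (q ++ p) := isDipath_append q hq hcyc
    have heq := hTuniq z q (q ++ p) hq h2
    have hl := congrArg List.length heq
    simp at hl
    exact hne hl
  -- in-degree at most one in T
  have hindeg : ∀ u v z, T u z → T v z → u = v := by
    intro u v z hu hv
    obtain ⟨pu, hpu⟩ := hpath u
    obtain ⟨pv, hpv⟩ := hpath v
    have h1 : IsDipath T r z (pu ++ [z]) := isDipath_append pu hpu ⟨hu, rfl⟩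
    have h2 : IsDipath T r z (pv ++ [z]) := isDipath_append pv hpv ⟨hv, rfl⟩
    have heq := hTuniq z _ _ h1 h2
    have hpp : pu = pv := by simpa using heq
    subst hpp
    exact isDipath_end_unique pu r u v hpu hpv
  -- r has no in-edge in T
  have hrin : ∀ u, ¬ T u r := by
    intro u hu
    obtain ⟨pu, hpu⟩ := hpath u
    exact hnocyc r (pu ++ [r]) (by simp) (isDipath_append pu hpu ⟨hu, rfl⟩)
  have hyr : y ≠ r := fun h => hrin x (h ▸ hxy)
  have hrc : r ≠ c := by
    intro h
    subst h
    obtain ⟨q, hq⟩ := hbelow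
    obtain ⟨p, hp⟩ := hpath y
    have hcyc : IsDipath T r r (p ++ q) := isDipath_append p hp hq
    have hpne : p ≠ [] := by
      intro h0
      subst h0
      exact hyr (show r = y from hp).symm
    exact hnocyc r (p ++ q) (by simp [hpne]) hcyc
  -- x is not below y
  have hxny : ¬ Below T x y := by
    rintro ⟨q, hq⟩
    obtain ⟨p, hp⟩ := hpath y
    have h2 : IsDipath T r y (p ++ (q ++ [y])) :=
      isDipath_append p hp (isDipath_append q hq ⟨hxy, rfl⟩)
    have heq := hTuniq y p _ hp h2
    have hl := congrArg List.length heq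
    simp at hl
  -- T-paths starting below y are T'-paths
  have hsub1 : ∀ (q : List V) (a z : V), IsDipath T a z q → Below T a y → IsDipath T' a z q := by
    intro q
    induction q with
    | nil => intro a z h _; exact h
    | cons w q ih =>
      intro a z h hb
      refine ⟨Or.inl ⟨h.1, ?_⟩, ih w z h.2 ?_⟩
      · rintro ⟨rfl, rfl⟩; exact hxny hb
      · obtain ⟨p, hp⟩ := hb
        exact ⟨p ++ [w], isDipath_append p hp ⟨h.1, rfl⟩⟩
  -- T-paths ending not below y are T'-paths
  have hsub2 : ∀ (q : List V) (a z : V), IsDipath T a z q → ¬ Below T z y → IsDipath T' a z q := by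
    intro q
    induction q with
    | nil => intro a z h _; exact h
    | cons w q ih =>
      intro a z h hb
      refine ⟨Or.inl ⟨h.1, ?_⟩, ih w z h.2 hb⟩
      rintro ⟨rfl, rfl⟩
      exact hb ⟨q, h.2⟩
  -- no T'-edge into y
  have hroot' : ∀ u, ¬ T' u y := by
    rintro u (⟨hu, hne⟩ | ⟨rfl, h2⟩)
    · exact hne ⟨hindeg u x y hu hxy, rfl⟩
    · exact hyr h2
  -- in-degree at most one in T'
  have hin' : ∀ u v z, T' u z → T' v z → u = v := by
    rintro u v z (⟨hu, -⟩ | ⟨rfl, rfl⟩) (⟨hv, -⟩ | ⟨rfl, hv2⟩)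
    · exact hindeg u v z hu hv
    · exact absurd (hv2 ▸ hu) (hrin u)
    · exact absurd hv (hrin v)
    · rfl
  constructor
  · rintro a b (⟨h, -⟩ | ⟨rfl, rfl⟩)
    · exact hE a b h
    · exact hsource _ hrc
  · intro z
    have hex : ∃ p, IsDipath T' y z p := by
      by_cases hbz : Below T z y
      · obtain ⟨q, hq⟩ := hbz
        exact ⟨q, hsub1 q y z hq ⟨[], rfl⟩⟩
      · obtain ⟨qc, hqc⟩ := hbelow
        obtain ⟨pz, hpz⟩ := hpath z
        refine ⟨(qc ++ [r]) ++ pz, isDipath_append (qc ++ [r]) ?_ (hsub2 pz r z hpz hbz)⟩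
        exact isDipath_append qc (hsub1 qc y c hqc ⟨[], rfl⟩) ⟨Or.inr ⟨rfl, rfl⟩, rfl⟩
    obtain ⟨p, hp⟩ := hex
    exact ⟨p, hp, fun q hq =>
      dipath_unique hroot' hin' (q.length + p.length) q p z le_rfl hq hp⟩
end

section
/- For a simple graph G with double directed graph D, the k-skeleton of the complex of directed trees of D is pure if and only if k ≤ |V(G)| - 1 - r(G), where r(G) is the maximal cardinality of a strongly independent subset of V(G). -/
/-- `A` is a strongly independent set in `G`: it is independent and the neighborhoods
of distinct elements are pairwise disjoint. -/
def StronglyIndep {V : Type} (G : SimpleGraph V) (A : Finset V) : Prop :=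
  (∀ x ∈ A, ∀ y ∈ A, ¬ G.Adj x y) ∧
  ∀ x ∈ A, ∀ y ∈ A, x ≠ y → Disjoint (G.neighborSet x) (G.neighborSet y)

lemma dipath_mono_s5 {V : Type} {T T' : V → V → Prop} (h : ∀ x y, T x y → T' x y) :
    ∀ (p : List V) (a b : V), IsDipath T a b p → IsDipath T' a b p := by
  intro p
  induction p with
  | nil => intro a b hp; exact hp
  | cons c q ih =>
    intro a b hp
    exact ⟨h _ _ hp.1, ih _ _ hp.2⟩

lemma forest_subset {V : Type} [DecidableEq V] {E : V → V → Prop}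
    {F F' : Finset (V × V)} (hsub : F' ⊆ F) (h : IsDirectedForest E F) :
    IsDirectedForest E F' := by
  refine ⟨fun e he => h.1 e (hsub he), fun x y y' hy hy' => h.2.1 x y y' (hsub hy) (hsub hy'),
    fun x p hp hdip => h.2.2 x p hp ?_⟩
  exact dipath_mono_s5 (fun a b hab => hsub hab) p x x hdip

lemma dipath_reach {V : Type} {T : V → V → Prop} :
    ∀ (p : List V) (a b : V), IsDipath T a b p → Relation.ReflTransGen T a b := by
  intro p
  induction p with
  | nil => intro a b hp; exact hp ▸ Relation.ReflTransGen.refl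
  | cons c q ih => intro a b hp; exact Relation.ReflTransGen.head hp.1 (ih _ _ hp.2)

lemma insert_extract {V : Type} [DecidableEq V] {M : Finset (V × V)} {u v : V} :
    ∀ (p : List V) (a b : V), IsDipath (edgeRel (insert (u, v) M)) a b p →
      Relation.ReflTransGen (edgeRel M) v u ∨ IsDipath (edgeRel M) a b p ∨
        (Relation.ReflTransGen (edgeRel M) a u ∧ Relation.ReflTransGen (edgeRel M) v b) := by
  intro p
  induction p with
  | nil => intro a b hp; exact Or.inr (Or.inl hp)
  | cons c q ih =>
    intro a b hp
    rcases Finset.mem_insert.1 hp.1 with he | he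
    · have ha : a = u := congrArg Prod.fst he
      have hc : c = v := congrArg Prod.snd he
      rcases ih c b hp.2 with h1 | h2 | h3
      · exact Or.inl h1
      · exact Or.inr (Or.inr ⟨ha ▸ Relation.ReflTransGen.refl,
          hc ▸ dipath_reach q c b h2⟩)
      · exact Or.inl (hc ▸ h3.1)
    · rcases ih c b hp.2 with h1 | h2 | h3
      · exact Or.inl h1
      · exact Or.inr (Or.inl ⟨he, h2⟩)
      · exact Or.inr (Or.inr ⟨Relation.ReflTransGen.head he h3.1, h3.2⟩)

lemma unique_pred_reach {V : Type} {T : V → V → Prop}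
    (hT : ∀ x y y', T y x → T y' x → y = y') {a c : V}
    (hac : Relation.ReflTransGen T a c) :
    ∀ b, Relation.ReflTransGen T b c → Relation.ReflTransGen T a b ∨ Relation.ReflTransGen T b a := by
  induction hac using Relation.ReflTransGen.head_induction_on with
  | refl => intro b hb; exact Or.inr hb
  | @head a a' step tail ih =>
    intro b hb
    rcases ih b hb with h1 | h2
    · exact Or.inl (Relation.ReflTransGen.head step h1)
    · rcases Relation.ReflTransGen.cases_tail h2 with h | ⟨w, hw1, hw2⟩
      · exact Or.inl (h ▸ Relation.ReflTransGen.single step)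
      · have : w = a := hT a' w a hw2 step
        exact Or.inr (this ▸ hw1)

lemma exists_maximal_aux {V : Type} [Fintype V] [DecidableEq V] (E : V → V → Prop) :
    ∀ (n : ℕ) (F : Finset (V × V)), Fintype.card (V × V) - F.card ≤ n →
      IsDirectedForest E F →
      ∃ M, IsDirectedForest E M ∧ F ⊆ M ∧ ∀ e ∉ M, ¬ IsDirectedForest E (insert e M) := by
  intro n
  induction n with
  | zero =>
    intro F hn hF
    have hcard : F = Finset.univ := Finset.eq_univ_of_card F
      (le_antisymm (Finset.card_le_univ F) (by omega))
    exact ⟨F, hF, subset_rfl, fun e he => absurd (hcard ▸ Finset.mem_univ e) he⟩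
  | succ n ih =>
    intro F hn hF
    by_cases hmax : ∀ e ∉ F, ¬ IsDirectedForest E (insert e F)
    · exact ⟨F, hF, subset_rfl, hmax⟩
    · push_neg at hmax
      obtain ⟨e, he, hef⟩ := hmax
      have hcard : (insert e F).card = F.card + 1 := Finset.card_insert_of_notMem he
      have hle : (insert e F).card ≤ Fintype.card (V × V) := by
        simpa using Finset.card_le_univ (insert e F)
      obtain ⟨M, hM1, hM2, hM3⟩ := ih (insert e F) (by omega) hef
      exact ⟨M, hM1, (Finset.subset_insert e F).trans hM2, hM3⟩

lemma exists_maximal {V : Type} [Fintype V] [DecidableEq V] (E : V → V → Prop)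
    (F : Finset (V × V)) (hF : IsDirectedForest E F) :
    ∃ M, IsDirectedForest E M ∧ F ⊆ M ∧ ∀ e ∉ M, ¬ IsDirectedForest E (insert e M) :=
  exists_maximal_aux E _ F le_rfl hF

/-- If `M` is a maximal directed forest, `u` a root, and `u ~ w`, then `w` is reachable
from `u` in `M`. -/
lemma reach_of_root {V : Type} [DecidableEq V] {G : SimpleGraph V} {M : Finset (V × V)}
    (hM : IsDirectedForest G.Adj M)
    (hmax : ∀ e ∉ M, ¬ IsDirectedForest G.Adj (insert e M))
    {u w : V} (hu : ∀ y, (y, u) ∉ M) (huw : G.Adj u w) :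
    Relation.ReflTransGen (edgeRel M) u w := by
  have henm : (w, u) ∉ M := hu w
  have hnot := hmax (w, u) henm
  have h1 : ∀ e ∈ insert (w, u) M, G.Adj e.1 e.2 := by
    intro e he
    rcases Finset.mem_insert.1 he with he | he
    · rw [he]; exact huw.symm
    · exact hM.1 e he
  have h2 : ∀ x y y' : V, (y, x) ∈ insert (w, u) M → (y', x) ∈ insert (w, u) M → y = y' := by
    intro x y y' hy hy'
    rcases Finset.mem_insert.1 hy with hy | hy <;> rcases Finset.mem_insert.1 hy' with hy' | hy'
    · simp only [Prod.mk.injEq] at hy hy'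
      rw [hy.1, hy'.1]
    · simp only [Prod.mk.injEq] at hy
      exact absurd (hy.2 ▸ hy') (hu y')
    · simp only [Prod.mk.injEq] at hy'
      exact absurd (hy'.2 ▸ hy) (hu y)
    · exact hM.2.1 x y y' hy hy'
  have h3 : ¬ ∀ (x : V) (p : List V), p ≠ [] → ¬ IsDipath (edgeRel (insert (w, u) M)) x x p :=
    fun hC => hnot ⟨h1, h2, hC⟩
  push_neg at h3
  obtain ⟨x, p, hne, hdip⟩ := h3
  rcases insert_extract p x x hdip with h | h | ⟨hxu, hvx⟩
  · exact h
  · exact absurd h (hM.2.2 x p hne)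
  · exact hvx.trans hxu

/-- For a simple graph `G` with double directed graph `D`, the `k`-skeleton of the complex
of directed trees of `D` is pure (every directed forest with at most `k+1` edges extends to
one with exactly `k+1` edges) if and only if `k ≤ |V(G)| - 1 - r(G)`, where `r(G)` is the
maximal cardinality of a strongly independent subset of `V(G)`. -/
theorem skeleton_pure_iff {V : Type} [Fintype V] [DecidableEq V] (G : SimpleGraph V)
    (k r : ℕ)
    (hr : IsGreatest {m : ℕ | ∃ A : Finset V, StronglyIndep G A ∧ A.card = m} r) :
    (∀ F : Finset (V × V), IsDirectedForest G.Adj F → F.card ≤ k + 1 →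
        ∃ F' : Finset (V × V), IsDirectedForest G.Adj F' ∧ F ⊆ F' ∧ F'.card = k + 1) ↔
      k + 1 + r ≤ Fintype.card V := by
  classical
  constructor
  · intro hpure
    by_contra hlt
    push_neg at hlt
    obtain ⟨A, hA, hAcard⟩ := hr.1
    -- the star forest rooted at A
    set F : Finset (V × V) := Finset.univ.filter (fun e => e.1 ∈ A ∧ G.Adj e.1 e.2) with hFdef
    have hFmem : ∀ e : V × V, e ∈ F ↔ e.1 ∈ A ∧ G.Adj e.1 e.2 := by
      intro e; simp [hFdef]
    have hF : IsDirectedForest G.Adj F := by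
      refine ⟨fun e he => ((hFmem e).1 he).2, ?_, ?_⟩
      · intro x y y' hy hy'
        by_contra hne
        have hyA := (hFmem _).1 hy
        have hy'A := (hFmem _).1 hy'
        have hdisj := hA.2 y hyA.1 y' hy'A.1 hne
        exact Set.disjoint_left.1 hdisj hyA.2 hy'A.2
      · intro x p hne hdip
        match p, hne with
        | [c], _ =>
          obtain ⟨h1, h2⟩ := hdip
          have : (x, c) ∈ F := h1
          rw [show c = x from h2] at this
          exact G.irrefl ((hFmem _).1 this).2
        | c :: d :: q, _ =>
          obtain ⟨h1, h2, _⟩ := hdip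
          have e1 := (hFmem (x, c)).1 h1
          have e2 := (hFmem (c, d)).1 h2
          exact hA.1 x e1.1 c e2.1 e1.2
    obtain ⟨M, hM, hFM, hmax⟩ := exists_maximal G.Adj F hF
    -- every element of A is a root of M
    have hAroot : ∀ a ∈ A, ∀ y, (y, a) ∉ M := by
      intro a ha y hya
      have hadj : G.Adj y a := hM.1 (y, a) hya
      have hay : (a, y) ∈ M := hFM ((hFmem (a, y)).2 ⟨ha, hadj.symm⟩)
      exact hM.2.2 a [y, a] (by simp) ⟨hay, hya, rfl⟩
    -- the heads of M avoid A
    have hheads : M.image Prod.snd ⊆ Aᶜ := by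
      intro x hx
      obtain ⟨e, he, hex⟩ := Finset.mem_image.1 hx
      rw [Finset.mem_compl]
      intro hxA
      have h1 : (e.1, e.2) ∈ M := by simpa using he
      rw [hex] at h1
      exact hAroot x hxA e.1 h1
    have hinj : Set.InjOn Prod.snd (M : Set (V × V)) := by
      intro e he e' he' hee
      have h1 : (e.1, e.2) ∈ M := by simpa using he
      have h2 : (e'.1, e.2) ∈ M := by rw [hee]; simpa using he'
      have := hM.2.1 e.2 e.1 e'.1 h1 h2
      exact Prod.ext this hee
    have hMcard : M.card = (M.image Prod.snd).card := (Finset.card_image_of_injOn hinj).symm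
    have hcardle : M.card ≤ Fintype.card V - r := by
      rw [hMcard]
      calc (M.image Prod.snd).card ≤ Aᶜ.card := Finset.card_le_card hheads
        _ = Fintype.card V - r := by rw [Finset.card_compl, hAcard]
    have hrle : r ≤ Fintype.card V := hAcard ▸ Finset.card_le_univ A
    have hMk : M.card ≤ k := by omega
    obtain ⟨F'', hF'', hMF'', hF''card⟩ := hpure M hM (by omega)
    have hssub : M ⊂ F'' := lt_of_le_of_ne hMF'' (fun h => by rw [h] at hMk; omega)
    obtain ⟨e, heF'', heM⟩ := Finset.exists_of_ssubset hssub
    exact hmax e heM (forest_subset (Finset.insert_subset heF'' hMF'') hF'')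
  · intro hineq F hF hFcard
    obtain ⟨M, hM, hFM, hmax⟩ := exists_maximal G.Adj F hF
    set R : Finset V := Finset.univ.filter (fun x => ∀ y, (y, x) ∉ M) with hRdef
    have hRmem : ∀ x, x ∈ R ↔ ∀ y, (y, x) ∉ M := by intro x; simp [hRdef]
    -- R is strongly independent
    have hRreach : ∀ x ∈ R, ∀ w, G.Adj x w → Relation.ReflTransGen (edgeRel M) x w :=
      fun x hx w hxw => reach_of_root hM hmax ((hRmem x).1 hx) hxw
    have hnoarrive : ∀ x ∈ R, ∀ y, Relation.ReflTransGen (edgeRel M) y x → y = x := by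
      intro x hx y hyx
      rcases Relation.ReflTransGen.cases_tail hyx with h | ⟨c, _, hc⟩
      · exact h.symm
      · exact absurd hc ((hRmem x).1 hx c)
    have hRsi : StronglyIndep G R := by
      constructor
      · intro x hx y hy hxy
        have hreach : Relation.ReflTransGen (edgeRel M) x y := hRreach x hx y hxy
        exact G.ne_of_adj hxy (hnoarrive y hy x hreach)
      · intro x hx y hy hxy
        rw [Set.disjoint_left]
        intro w hw hw'
        have h1 : Relation.ReflTransGen (edgeRel M) x w := hRreach x hx w hw
        have h2 : Relation.ReflTransGen (edgeRel M) y w := hRreach y hy w hw'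
        rcases unique_pred_reach hM.2.1 h1 y h2 with h | h
        · exact hxy (hnoarrive y hy x h)
        · exact hxy (hnoarrive x hx y h).symm
    have hRcard : R.card ≤ r := hr.2 ⟨R, hRsi, rfl⟩
    -- card M = |V| - |R|
    have himg : M.image Prod.snd = Rᶜ := by
      ext x
      rw [Finset.mem_compl, hRmem]
      constructor
      · intro hx hall
        obtain ⟨e, he, hex⟩ := Finset.mem_image.1 hx
        have h1 : (e.1, e.2) ∈ M := by simpa using he
        rw [hex] at h1
        exact hall e.1 h1
      · intro h
        push_neg at h
        obtain ⟨y, hy⟩ := h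
        exact Finset.mem_image.2 ⟨(y, x), hy, rfl⟩
    have hinj : Set.InjOn Prod.snd (M : Set (V × V)) := by
      intro e he e' he' hee
      have h1 : (e.1, e.2) ∈ M := by simpa using he
      have h2 : (e'.1, e.2) ∈ M := by rw [hee]; simpa using he'
      exact Prod.ext (hM.2.1 e.2 e.1 e'.1 h1 h2) hee
    have hMcard : M.card = Fintype.card V - R.card := by
      rw [← Finset.card_image_of_injOn hinj, himg, Finset.card_compl]
    have hRle : R.card ≤ Fintype.card V := Finset.card_le_univ R
    have hMbig : k + 1 ≤ M.card := by omega
    obtain ⟨F', hFF', hF'M, hF'card⟩ :=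
      Finset.exists_subsuperset_card_eq hFM hFcard (by omega)
    exact ⟨F', forest_subset hF'M hM, hFF', by omega⟩
end

section
/- Let D be a directed graph, v a leaf with unique neighbor x such that v→x ∈ E(D) and x→v ∉ E(D). Let y_1,...,y_k be the vertices of D \ {v} with y_i→x ∈ E(D). Then every facet F of Δ(D) either contains v→x and none of the edges y_i→x, or contains exactly one edge y_p→x and not v→x. -/

lemma dipath_last {V : Type} {T : V → V → Prop} {b : V} :
    ∀ {p : List V} {a : V}, IsDipath T a b p → p ≠ [] → ∃ w, T w b := by
  intro p
  induction p with
  | nil => intro a _ hne; exact absurd rfl hne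
  | cons c q ih =>
    intro a h _
    rcases q with _ | ⟨d, q⟩
    · have hb : c = b := h.2
      exact ⟨a, hb ▸ h.1⟩
    · exact ih h.2 (by simp)

lemma dipath_mem {V : Type} {T : V → V → Prop} {b u : V} :
    ∀ {p : List V} {a : V}, IsDipath T a b p → u ∈ p → ∃ w, T w u := by
  intro p
  induction p with
  | nil => intro a _ h; simp at h
  | cons c q ih =>
    intro a h hm
    rcases List.mem_cons.mp hm with h1 | h2
    · exact ⟨a, h1 ▸ h.1⟩
    · exact ih h.2 h2

lemma dipath_restrict {V : Type} [DecidableEq V] {F : Finset (V × V)} {e : V × V} {b : V} :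
    ∀ {p : List V} {a : V}, IsDipath (edgeRel (insert e F)) a b p → a ≠ e.1 → e.1 ∉ p →
      IsDipath (edgeRel F) a b p := by
  intro p
  induction p with
  | nil => intro a h _ _; exact h
  | cons c q ih =>
    intro a h ha hp
    obtain ⟨h1, h2⟩ := h
    have hcF : (a, c) ∈ F := by
      rcases Finset.mem_insert.mp h1 with h | h
      · exact absurd (congrArg Prod.fst h) ha
      · exact h
    refine ⟨hcF, ih h2 ?_ ?_⟩
    · intro hc; exact hp (by rw [hc]; exact List.mem_cons_self)
    · intro hc; exact hp (List.mem_cons_of_mem _ hc)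

/-- Let `v` be a leaf of a digraph `E` with unique neighbor `x`, with `v → x ∈ E` and
`x → v ∉ E`.  Then every facet `F` of `Δ(E)` either contains `v → x` and none of the edges
`y → x` with `y ≠ v`, or it does not contain `v → x` and contains exactly one edge
`y → x` with `y ≠ v`. -/
theorem facet_dichotomy_leaf {V : Type} [DecidableEq V] (E : V → V → Prop) (v x : V)
    (hne : v ≠ x) (hEvx : E v x) (hnE : ¬ E x v)
    (hleaf : ∀ z w : V, E z w → (z = v → w = x) ∧ (w = v → z = x)) :
    ∀ F : Finset (V × V), IsFacet E F →
      ((v, x) ∈ F ∧ ∀ y : V, y ≠ v → (y, x) ∉ F) ∨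
      ((v, x) ∉ F ∧ ∃! y : V, y ≠ v ∧ (y, x) ∈ F) := by
  intro F hF
  obtain ⟨⟨hFE, hInd, hCyc⟩, hMax⟩ := hF
  by_cases hvx : (v, x) ∈ F
  · left
    exact ⟨hvx, fun y hy hyx => hy (hInd x y v hyx hvx)⟩
  · right
    refine ⟨hvx, ?_⟩
    by_cases hex : ∃ y, y ≠ v ∧ (y, x) ∈ F
    · obtain ⟨y, hy, hyx⟩ := hex
      exact ⟨y, ⟨hy, hyx⟩, fun z hz => hInd x z y hz.2 hyx⟩
    · exfalso
      have hnox : ∀ y, (y, x) ∉ F := by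
        intro y hyF
        by_cases hyv : y = v
        · exact hvx (hyv ▸ hyF)
        · exact hex ⟨y, hyv, hyF⟩
      have hnov : ∀ w, (w, v) ∉ insert (v, x) F := by
        intro w hw
        rcases Finset.mem_insert.mp hw with h | h
        · simp only [Prod.mk.injEq] at h
          exact hne h.2
        · have hE := hFE _ h
          have hx := (hleaf w v hE).2 rfl
          exact hnE (hx ▸ hE)
      have hforest : IsDirectedForest E (insert (v, x) F) := by
        refine ⟨?_, ?_, ?_⟩
        · intro e he
          rcases Finset.mem_insert.mp he with h | h
          · rw [h]; exact hEvx
          · exact hFE e h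
        · intro a y y' hy hy'
          rcases Finset.mem_insert.mp hy with h | h
          · rcases Finset.mem_insert.mp hy' with h' | h'
            · simp only [Prod.mk.injEq] at h h'
              rw [h.1, h'.1]
            · simp only [Prod.mk.injEq] at h
              exact absurd (h.2 ▸ h') (hnox y')
          · rcases Finset.mem_insert.mp hy' with h' | h'
            · simp only [Prod.mk.injEq] at h'
              exact absurd (h'.2 ▸ h) (hnox y)
            · exact hInd a y y' h h'
        · intro a p hp hpath
          have hav : a ≠ v := by
            rintro rfl
            obtain ⟨w, hw⟩ := dipath_last hpath hp
            exact hnov w hw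
          have hvp : v ∉ p := by
            intro hvp
            obtain ⟨w, hw⟩ := dipath_mem hpath hvp
            exact hnov w hw
          exact hCyc a p hp (dipath_restrict hpath hav hvp)
      have heq := hMax _ hforest (Finset.subset_insert _ _)
      exact hvx (heq ▸ Finset.mem_insert_self _ _)
end

section
/- Let T be an undirected tree and let G be the graph on the directed edges of the double direction of T where two directed edges are adjacent iff they share the same sink or are opposite orientations of the same edge. Then G has no chordless cycle of length other than 3. -/
/-- The graph on the arcs of the double direction of `G`: two arcs are adjacent iff they
are distinct and either have the same sink or are the two opposite orientations of the
same edge of `G`.  (Only pairs that are genuine arcs of `G` are ever adjacent.) -/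
def arcGraph {V : Type} (G : SimpleGraph V) : SimpleGraph (V × V) where
  Adj e f := G.Adj e.1 e.2 ∧ G.Adj f.1 f.2 ∧ e ≠ f ∧
    (e.2 = f.2 ∨ (e.1 = f.2 ∧ e.2 = f.1))
  symm := by
    constructor
    rintro ⟨a, b⟩ ⟨c, d⟩ ⟨h1, h2, h3, h4⟩
    refine ⟨h2, h1, fun h => h3 h.symm, ?_⟩
    rcases h4 with h | ⟨h, h'⟩
    · exact Or.inl h.symm
    · exact Or.inr ⟨h'.symm, h.symm⟩
  loopless := by constructor; rintro ⟨a, b⟩ ⟨-, -, h, -⟩; exact h rfl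

open SimpleGraph in
/-- In a tree, two vertices at the same distance from a root are never adjacent. -/
private lemma tree_dist_ne_of_adj {V : Type} {G : SimpleGraph V} (hG : G.IsTree) (r a u : V)
    (h : G.Adj a u) : G.dist r a ≠ G.dist r u := by
  classical
  intro heq
  have hbridge := (isAcyclic_iff_forall_adj_isBridge.mp hG.2) h
  rw [isBridge_iff] at hbridge
  apply hbridge
  rw [reachable_delete_edges_iff_exists_walk]
  obtain ⟨pa, hpa⟩ := hG.1.exists_walk_length_eq_dist r a
  obtain ⟨pu, hpu⟩ := hG.1.exists_walk_length_eq_dist r u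
  refine ⟨pa.reverse.append pu, ?_⟩
  intro hmem
  rw [Walk.edges_append, List.mem_append, Walk.edges_reverse, List.mem_reverse] at hmem
  have hne : a ≠ u := G.ne_of_adj h
  rcases hmem with hmem | hmem
  · have hu : u ∈ pa.support := Walk.snd_mem_support_of_mem_edges pa hmem
    have hsplit := congrArg Walk.length (pa.take_spec hu)
    rw [Walk.length_append] at hsplit
    have hdrop : (pa.dropUntil u hu).length ≠ 0 := fun h0 =>
      hne ((Walk.eq_of_length_eq_zero h0).symm)
    have hd : G.dist r u ≤ (pa.takeUntil u hu).length := dist_le _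
    omega
  · have ha : a ∈ pu.support := Walk.fst_mem_support_of_mem_edges pu hmem
    have hsplit := congrArg Walk.length (pu.take_spec ha)
    rw [Walk.length_append] at hsplit
    have hdrop : (pu.dropUntil a ha).length ≠ 0 := fun h0 =>
      hne (Walk.eq_of_length_eq_zero h0)
    have hd : G.dist r a ≤ (pu.takeUntil a ha).length := dist_le _
    omega

open SimpleGraph in
/-- In a tree, a vertex has a unique neighbour strictly closer to any root. -/
private lemma tree_unique_parent {V : Type} {G : SimpleGraph V} (hG : G.IsTree) (r a b u : V)
    (ha : G.Adj a u) (hb : G.Adj b u) (hda : G.dist r a + 1 = G.dist r u)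
    (hdb : G.dist r b + 1 = G.dist r u) : a = b := by
  obtain ⟨pa, hla⟩ := hG.1.exists_walk_length_eq_dist r a
  obtain ⟨pb, hlb⟩ := hG.1.exists_walk_length_eq_dist r b
  have hWa : (pa.concat ha).IsPath :=
    Walk.isPath_of_length_eq_dist _ (by rw [Walk.length_concat, hla, hda])
  have hWb : (pb.concat hb).IsPath :=
    Walk.isPath_of_length_eq_dist _ (by rw [Walk.length_concat, hlb, hdb])
  have hpq : (⟨pa.concat ha, hWa⟩ : G.Path r u) = ⟨pb.concat hb, hWb⟩ :=
    isAcyclic_iff_path_unique.mp hG.2 _ _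
  have heq : pa.concat ha = pb.concat hb := congrArg Subtype.val hpq
  obtain ⟨hv, -⟩ := Walk.concat_inj heq
  exact hv

/-- For a tree `G`, the arc graph of the double direction of `G` has no chordless cycle of
length other than `3`: any chordless cycle (an injective cyclic sequence of length
`m ≥ 3` whose only adjacencies are consecutive ones) has length `3`. -/
theorem arcGraph_no_long_chordless_cycles {V : Type} (G : SimpleGraph V) (hG : G.IsTree)
    (m : ℕ) (hm : 3 ≤ m) (c : ZMod m → V × V) (hinj : Function.Injective c)
    (hadj : ∀ i : ZMod m, (arcGraph G).Adj (c i) (c (i + 1)))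
    (hchord : ∀ i j : ZMod m, (arcGraph G).Adj (c i) (c j) → j = i + 1 ∨ i = j + 1) :
    m = 3 := by
  classical
  by_contra hne
  have hm4 : 4 ≤ m := by omega
  haveI : NeZero m := ⟨by omega⟩
  have hcast : ∀ k : ℕ, 0 < k → k < m → ((k : ℕ) : ZMod m) ≠ 0 := by
    intro k hk hkm h
    have := ZMod.val_cast_of_lt hkm
    rw [h, ZMod.val_zero] at this
    omega
  have h1 : (1 : ZMod m) ≠ 0 := by
    have := hcast 1 (by omega) (by omega); simpa using this
  have h2 : (2 : ZMod m) ≠ 0 := by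
    have := hcast 2 (by omega) (by omega)
    simpa using this
  have h3 : (3 : ZMod m) ≠ 0 := by
    have := hcast 3 (by omega) (by omega)
    simpa using this
  set v : ZMod m → V := fun i => (c i).2 with hv
  set Rev : ZMod m → Prop := fun i => (c i).1 = (c (i + 1)).2 ∧ (c i).2 = (c (i + 1)).1
    with hRevDef
  have harc : ∀ i, G.Adj (c i).1 (c i).2 := fun i => (hadj i).1
  have hstep : ∀ i, ¬ Rev i → v (i + 1) = v i := by
    intro i hr
    rcases (hadj i).2.2.2 with h | h
    · exact h.symm
    · exact absurd h hr
  have hrevAdj : ∀ i, Rev i → G.Adj (v i) (v (i + 1)) := by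
    rintro i ⟨ha1, -⟩
    have := (harc i).symm
    simp only [hv]
    rw [← ha1]
    exact this
  have hA : ∀ i, Rev i → Rev (i + 1) → False := by
    rintro i ⟨a1, a2⟩ ⟨b1, b2⟩
    have hcc : c (i + 1 + 1) = c i := Prod.ext (by rw [← b2, ← a1]) (by rw [← b1, ← a2])
    have hii : i + 1 + 1 = i := hinj hcc
    apply h2
    have : i + (1 + 1) = i + 0 := by rw [← add_assoc, hii, add_zero]
    have h20 : (1 + 1 : ZMod m) = 0 := add_left_cancel this
    calc (2 : ZMod m) = 1 + 1 := by norm_num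
      _ = 0 := h20
  by_cases hex : ∃ i, Rev i
  · obtain ⟨i0, hi0⟩ := hex
    set r : V := v 0 with hr
    obtain ⟨j, -, hjmax'⟩ := Finset.exists_max_image Finset.univ
      (fun i => G.dist r (v i)) ⟨0, Finset.mem_univ 0⟩
    have hjmax : ∀ i, G.dist r (v i) ≤ G.dist r (v j) :=
      fun i => hjmax' i (Finset.mem_univ i)
    -- next reverse step at or after j
    have hexn : ∃ nn : ℕ, Rev (j + (nn : ZMod m)) := by
      refine ⟨(i0 - j).val, ?_⟩
      rw [ZMod.natCast_zmod_val]
      have : j + (i0 - j) = i0 := by ring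
      rwa [this]
    set n : ℕ := Nat.find hexn with hn
    have hrevn : Rev (j + (n : ZMod m)) := Nat.find_spec hexn
    have hminn : ∀ t : ℕ, t < n → ¬ Rev (j + (t : ZMod m)) := fun t ht => Nat.find_min hexn ht
    have hvconst1 : ∀ t : ℕ, t ≤ n → v (j + (t : ZMod m)) = v j := by
      intro t
      induction t with
      | zero => simp
      | succ t ih =>
        intro ht
        have hnr : ¬ Rev (j + (t : ZMod m)) := hminn t (by omega)
        have hs := hstep _ hnr
        have hc : j + ((t + 1 : ℕ) : ZMod m) = (j + (t : ZMod m)) + 1 := by push_cast; ring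
        rw [hc, hs]
        exact ih (by omega)
    -- previous reverse step strictly before j
    have hexp : ∃ pp : ℕ, 1 ≤ pp ∧ Rev (j - (pp : ZMod m)) := by
      by_cases hij : i0 = j
      · refine ⟨m, by omega, ?_⟩
        have : j - ((m : ℕ) : ZMod m) = j := by
          rw [ZMod.natCast_self, sub_zero]
        rw [this, ← hij]
        exact hi0
      · refine ⟨(j - i0).val, ?_, ?_⟩
        · have hne0 : j - i0 ≠ 0 := sub_ne_zero.mpr (fun h => hij h.symm)
          have := (ZMod.val_eq_zero (j - i0)).not.mpr hne0
          omega
        · rw [ZMod.natCast_zmod_val]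
          have : j - (j - i0) = i0 := by ring
          rwa [this]
    set p : ℕ := Nat.find hexp with hp
    obtain ⟨hp1, hrevp⟩ : 1 ≤ p ∧ Rev (j - (p : ZMod m)) := Nat.find_spec hexp
    have hminp : ∀ q : ℕ, q < p → 1 ≤ q → ¬ Rev (j - (q : ZMod m)) :=
      fun q hq h1q hrq => Nat.find_min hexp hq ⟨h1q, hrq⟩
    have hvconst2 : ∀ t : ℕ, t < p → v (j - (t : ZMod m)) = v j := by
      intro t
      induction t with
      | zero => simp
      | succ t ih =>
        intro ht
        have hnr : ¬ Rev (j - ((t + 1 : ℕ) : ZMod m)) := hminp (t + 1) ht (by omega)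
        have hs := hstep _ hnr
        have hc : j - ((t + 1 : ℕ) : ZMod m) + 1 = j - (t : ZMod m) := by push_cast; ring
        rw [hc] at hs
        rw [← hs]
        exact ih (by omega)
    set j1 : ZMod m := j - (p : ZMod m) with hj1
    set j2 : ZMod m := j + (n : ZMod m) with hj2
    have hj2v : v j2 = v j := hvconst1 n le_rfl
    have hj1v : v (j1 + 1) = v j := by
      have hcp : ((p : ℕ) : ZMod m) = ((p - 1 : ℕ) : ZMod m) + 1 := by
        conv_lhs => rw [show p = (p - 1) + 1 by omega]
        push_cast
        ring
      have : j1 + 1 = j - ((p - 1 : ℕ) : ZMod m) := by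
        rw [hj1, hcp]; ring
      rw [this]
      exact hvconst2 (p - 1) (by omega)
    have hadj_a : G.Adj (v j1) (v j) := by
      have := hrevAdj j1 hrevp
      rwa [hj1v] at this
    have hadj_b : G.Adj (v j) (v (j2 + 1)) := by
      have := hrevAdj j2 hrevn
      rwa [hj2v] at this
    -- no backtracking: v j1 ≠ v (j2 + 1)
    have hab : v j1 ≠ v (j2 + 1) := by
      intro habq
      have hcj2 : c j2 = (v (j2 + 1), v j) := by
        refine Prod.ext ?_ ?_
        · rw [hrevn.1]
        · exact hj2v
      have hcj11 : c (j1 + 1) = (v j1, v j) := by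
        refine Prod.ext ?_ ?_
        · rw [← hrevp.2]
        · exact hj1v
      have : c j2 = c (j1 + 1) := by rw [hcj2, hcj11, habq]
      have hjj : j2 = j1 + 1 := hinj this
      exact hA j1 hrevp (by rw [← hjj]; exact hrevn)
    -- distance facts
    have hconn := hG.1
    have hda_lt : G.dist r (v j1) < G.dist r (v j) :=
      lt_of_le_of_ne (hjmax j1) (tree_dist_ne_of_adj hG r (v j1) (v j) hadj_a)
    have hdb_lt : G.dist r (v (j2 + 1)) < G.dist r (v j) :=
      lt_of_le_of_ne (hjmax (j2 + 1)) (tree_dist_ne_of_adj hG r (v (j2 + 1)) (v j) hadj_b.symm)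
    have hda_ge : G.dist r (v j) ≤ G.dist r (v j1) + 1 := by
      obtain ⟨q, hq⟩ := hconn.exists_walk_length_eq_dist r (v j1)
      have := SimpleGraph.dist_le (q.concat hadj_a)
      rwa [SimpleGraph.Walk.length_concat, hq] at this
    have hdb_ge : G.dist r (v j) ≤ G.dist r (v (j2 + 1)) + 1 := by
      obtain ⟨q, hq⟩ := hconn.exists_walk_length_eq_dist r (v (j2 + 1))
      have := SimpleGraph.dist_le (q.concat hadj_b.symm)
      rwa [SimpleGraph.Walk.length_concat, hq] at this
    exact hab (tree_unique_parent hG r (v j1) (v (j2 + 1)) (v j) hadj_a hadj_b.symm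
      (by omega) (by omega))
  · push_neg at hex
    have hconstNat : ∀ k : ℕ, v ((k : ℕ) : ZMod m) = v 0 := by
      intro k
      induction k with
      | zero => simp
      | succ k ih =>
        have hs := hstep ((k : ℕ) : ZMod m) (hex _)
        have hc : ((k + 1 : ℕ) : ZMod m) = ((k : ℕ) : ZMod m) + 1 := by push_cast; ring
        rw [hc, hs]
        exact ih
    have hconst : ∀ i : ZMod m, v i = v 0 := by
      intro i
      obtain ⟨k, rfl⟩ := ZMod.natCast_zmod_surjective i
      exact hconstNat k
    have hadj02 : (arcGraph G).Adj (c 0) (c 2) := by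
      refine ⟨(hadj 0).1, (hadj 2).1, ?_, Or.inl ?_⟩
      · intro h
        exact h2 ((hinj h).symm)
      · show v 0 = v 2
        exact (hconst 2).symm
    rcases hchord 0 2 hadj02 with h | h
    · apply h1
      rw [zero_add] at h
      linear_combination h
    · apply h3
      linear_combination -h
end

section
/- If D is the double directed graph of an (undirected) essentially-tree, i.e., D becomes an undirected tree when replacing pairs of opposite directed edges (or single directed edges) by undirected edges, then the complex of directed trees Δ(D) is vertex decomposable. -/
/-- Vertex decomposability of an abstract simplicial complex, given as the predicate `K`
of its faces: `K` is (empty or) a simplex, or it has a shedding vertex `v` (no face of the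
link of `v` is a facet of the deletion of `v`) whose deletion and link are both vertex
decomposable. -/
inductive VertexDecomposable {α : Type} [DecidableEq α] : (Finset α → Prop) → Prop
  | ofEmpty (K : Finset α → Prop) (h : ∀ F, ¬ K F) : VertexDecomposable K
  | ofSimplex (K : Finset α → Prop) (S : Finset α) (h : ∀ F, K F ↔ F ⊆ S) :
      VertexDecomposable K
  | shed (K : Finset α → Prop) (v : α)
      (hshed : ∀ F : Finset α, v ∉ F → K (insert v F) →
        ∃ F' : Finset α, K F' ∧ v ∉ F' ∧ F ⊂ F')
      (hdel : VertexDecomposable (fun F => K F ∧ v ∉ F))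
      (hlink : VertexDecomposable (fun F => v ∉ F ∧ K (insert v F))) :
      VertexDecomposable K

namespace ForestVD

variable {V : Type}

theorem dipath_mono {T T' : V → V → Prop} (h : ∀ x y, T x y → T' x y) :
    ∀ {p : List V} {a b : V}, IsDipath T a b p → IsDipath T' a b p := by
  intro p
  induction p with
  | nil => intro a b hp; exact hp
  | cons c q ih =>
    rintro a b ⟨h1, h2⟩
    exact ⟨h _ _ h1, ih h2⟩

theorem dipath_append1 {T : V → V → Prop} :
    ∀ {p : List V} {a b c : V}, IsDipath T a b p → T b c → IsDipath T a c (p ++ [c]) := by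
  intro p
  induction p with
  | nil => intro a b c hp hbc; exact ⟨hp ▸ hbc, rfl⟩
  | cons d q ih =>
    rintro a b c ⟨h1, h2⟩ hbc
    exact ⟨h1, ih h2 hbc⟩

theorem dipath_eq_last {T : V → V → Prop} :
    ∀ {p : List V} {a b : V}, IsDipath T a b p → ∀ (r : List V) (c : V),
      a :: p = r ++ [c] → c = b := by
  intro p
  induction p with
  | nil =>
    intro a b hp r c hr
    cases r with
    | nil =>
      simp only [List.nil_append, List.cons.injEq] at hr
      have hab : a = b := hp
      rw [← hr.1, hab]
    | cons x r' => simp at hr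
  | cons d q ih =>
    rintro a b ⟨h1, h2⟩ r c hr
    cases r with
    | nil => simp at hr
    | cons x r' =>
      simp only [List.cons_append, List.cons.injEq] at hr
      exact ih h2 r' c hr.2

end ForestVD
namespace ForestVD

theorem dipath_suffix {V : Type} {T : V → V → Prop} :
    ∀ {p : List V} {a b w : V}, IsDipath T a b p → w ∈ a :: p →
      ∃ p2, IsDipath T w b p2 ∧ w :: p2 <:+ a :: p := by
  intro p
  induction p with
  | nil =>
    intro a b w hp hw
    simp only [List.mem_singleton] at hw
    exact ⟨[], hw ▸ hp, by simp [hw]⟩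
  | cons c q ih =>
    rintro a b w ⟨h1, h2⟩ hw
    rcases List.mem_cons.mp hw with h | h
    · exact ⟨c :: q, h ▸ ⟨h1, h2⟩, h ▸ List.suffix_refl _⟩
    · obtain ⟨p2, hp2, hsuf⟩ := ih h2 h
      exact ⟨p2, hp2, hsuf.trans (List.suffix_cons a (c :: q))⟩

theorem dipath_snoc {V : Type} {T : V → V → Prop} :
    ∀ {p : List V} {a b : V}, p ≠ [] → IsDipath T a b p →
      ∃ q u, p = q ++ [b] ∧ IsDipath T a u q ∧ T u b := by
  intro p
  induction p with
  | nil => intro a b h; exact absurd rfl h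
  | cons c q ih =>
    rintro a b - ⟨h1, h2⟩
    cases q with
    | nil =>
      have hcb : c = b := h2
      exact ⟨[], a, by simp [hcb], rfl, hcb ▸ h1⟩
    | cons d q' =>
      obtain ⟨q2, u, heq, hq2, hub⟩ := ih (by simp) h2
      exact ⟨c :: q2, u, by simp [heq], ⟨h1, hq2⟩, hub⟩

theorem dipath_into {V : Type} {T : V → V → Prop} {p : List V} {a b : V}
    (h : p ≠ []) (hp : IsDipath T a b p) : ∃ z, T z b := by
  obtain ⟨q, u, _, _, hub⟩ := dipath_snoc h hp
  exact ⟨u, hub⟩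

theorem dipath_target {V : Type} {T : V → V → Prop} :
    ∀ {p : List V} {a b c : V}, IsDipath T a b p → c ∈ p → ∃ z, T z c := by
  intro p
  induction p with
  | nil => intro a b c _ hc; simp at hc
  | cons d q ih =>
    rintro a b c ⟨h1, h2⟩ hc
    rcases List.mem_cons.mp hc with h | h
    · exact ⟨a, h ▸ h1⟩
    · exact ih h2 h

theorem dipath_out {V : Type} {T : V → V → Prop} :
    ∀ {p : List V} {a b v : V}, IsDipath T a b p → v ∈ p → v = b ∨ ∃ w, T v w := by
  intro p
  induction p with
  | nil => intro a b v _ hv; simp at hv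
  | cons d q ih =>
    rintro a b v ⟨h1, h2⟩ hv
    rcases List.mem_cons.mp hv with h | h
    · cases q with
      | nil => exact Or.inl (h.trans h2)
      | cons e q' => exact Or.inr ⟨e, h ▸ h2.1⟩
    · exact ih h2 h

theorem dipath_avoid {V : Type} [DecidableEq V] {T : Finset (V × V)} {v : V} :
    ∀ {p : List V} {a b : V}, IsDipath (edgeRel T) a b p → (∀ c ∈ a :: p, c ≠ v) →
      IsDipath (edgeRel (T.filter fun e => e.1 ≠ v ∧ e.2 ≠ v)) a b p := by
  intro p
  induction p with
  | nil => intro a b hp _; exact hp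
  | cons c q ih =>
    rintro a b ⟨h1, h2⟩ hav
    refine ⟨?_, ih h2 ?_⟩
    · simp only [edgeRel, Finset.mem_filter]
      exact ⟨h1, hav a (by simp), hav c (by simp)⟩
    · intro x hx
      exact hav x (List.mem_cons_of_mem a hx)

theorem forest_subset {V : Type} [DecidableEq V] {E : V → V → Prop} {F F' : Finset (V × V)}
    (hF : IsDirectedForest E F) (hsub : F' ⊆ F) : IsDirectedForest E F' := by
  obtain ⟨h1, h2, h3⟩ := hF
  refine ⟨fun e he => h1 e (hsub he), fun x y y' hy hy' => h2 x y y' (hsub hy) (hsub hy'), ?_⟩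
  intro x p hp hdp
  exact h3 x p hp (dipath_mono (fun a b hab => hsub hab) hdp)

theorem forest_empty {V : Type} [DecidableEq V] (E : V → V → Prop) :
    IsDirectedForest E (∅ : Finset (V × V)) := by
  refine ⟨by simp, by simp, ?_⟩
  intro x p hp hdp
  cases p with
  | nil => exact hp rfl
  | cons c q => exact absurd hdp.1 (by simp [edgeRel])

theorem forest_oppfree {V : Type} [DecidableEq V] {E : V → V → Prop} {F : Finset (V × V)}
    (hF : IsDirectedForest E F) {a b : V} (hab : (a, b) ∈ F) : (b, a) ∉ F := by
  intro hba
  exact hF.2.2 a [b, a] (by simp) ⟨hab, hba, rfl⟩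

theorem forest_edges_subset {V : Type} [DecidableEq V] {ED F : Finset (V × V)}
    (hF : IsDirectedForest (edgeRel ED) F) : F ⊆ ED := by
  intro e he
  have := hF.1 e he
  simpa [edgeRel] using this

/-- `v` is a leaf of the (symmetrized) digraph `T` with unique neighbour `u`. -/
def HasLeaf {V : Type} (T : Finset (V × V)) : Prop :=
  ∃ u v : V, ((u, v) ∈ T ∨ (v, u) ∈ T) ∧ ∀ w, w ≠ u → (w, v) ∉ T ∧ (v, w) ∉ T

end ForestVD
namespace ForestVD

theorem no_cycle {V : Type} [DecidableEq V] :
    ∀ (n : ℕ) (T : Finset (V × V)), T.card ≤ n →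
      (∀ T' ⊆ T, T'.Nonempty → HasLeaf T') → (∀ x, (x, x) ∉ T) →
      (∀ a b, (a, b) ∈ T → (b, a) ∉ T) →
      ∀ (x : V) (p : List V), p ≠ [] → ¬ IsDipath (edgeRel T) x x p := by
  intro n
  induction n with
  | zero =>
    intro T hcard _ _ _ x p hp hdp
    have hT : T = ∅ := Finset.card_eq_zero.mp (Nat.le_zero.mp hcard)
    cases p with
    | nil => exact hp rfl
    | cons c q => exact absurd hdp.1 (by simp [edgeRel, hT])
  | succ n ih =>
    intro T hcard hhl hirr hopp x p hp hdp
    -- T is nonempty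
    have hTne : T.Nonempty := by
      cases p with
      | nil => exact absurd rfl hp
      | cons c q => exact ⟨(x, c), hdp.1⟩
    obtain ⟨u, v, hedge, hleaf⟩ := hhl T Finset.Subset.rfl hTne
    have huv : u ≠ v := by
      rintro rfl
      rcases hedge with h | h <;> exact hirr u h
    -- the cycle avoids v
    have hvnot : ∀ c ∈ x :: p, c ≠ v := by
      intro c hc hcv
      -- v has both an in-edge and an out-edge along the cycle
      have hout : ∃ w, (c, w) ∈ T := by
        rcases List.mem_cons.mp hc with h | h
        · subst h
          cases p with
          | nil => exact absurd rfl hp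
          | cons d q => exact ⟨d, hdp.1⟩
        · rcases dipath_out hdp h with h' | h'
          · subst h'
            cases p with
            | nil => exact absurd rfl hp
            | cons d q => exact ⟨d, hdp.1⟩
          · exact h'
      have hin : ∃ z, (z, c) ∈ T := by
        rcases List.mem_cons.mp hc with h | h
        · subst h
          exact dipath_into hp hdp
        · exact dipath_target hdp h
      obtain ⟨w, hw⟩ := hout
      obtain ⟨z, hz⟩ := hin
      rw [hcv] at hw hz
      have hwu : w = u := by
        by_contra hne
        exact (hleaf w hne).2 hw
      have hzu : z = u := by
        by_contra hne
        exact (hleaf z hne).1 hz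
      exact hopp u v (hzu ▸ hz) (hwu ▸ hw)
    -- pass to the subgraph avoiding v
    set T' := T.filter fun e => e.1 ≠ v ∧ e.2 ≠ v with hT'
    have hdp' := dipath_avoid hdp hvnot
    have hss : T' ⊂ T := by
      refine ⟨Finset.filter_subset _ _, fun hsub => ?_⟩
      rcases hedge with h | h
      · have := hsub h
        rw [hT', Finset.mem_filter] at this
        exact this.2.2 rfl
      · have := hsub h
        rw [hT', Finset.mem_filter] at this
        exact this.2.1 rfl
    have hcard' : T'.card ≤ n := by
      have := Finset.card_lt_card hss
      omega
    exact ih T' hcard'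
      (fun T'' hsub hne => hhl T'' (hsub.trans (Finset.filter_subset _ _)) hne)
      (fun y hy => hirr y (Finset.filter_subset _ _ hy))
      (fun a b ha hb => hopp a b (Finset.filter_subset _ _ ha) (Finset.filter_subset _ _ hb))
      x p hp hdp'

end ForestVD
namespace ForestVD

/-- Adding to a directed forest an edge whose target has no in-edges: still a forest. -/
theorem forest_insert {V : Type} [DecidableEq V] {ED F : Finset (V × V)} {t w : V}
    (hhl : ∀ T' ⊆ ED, T'.Nonempty → HasLeaf T') (hirr : ∀ x, (x, x) ∉ ED)
    (hF : IsDirectedForest (edgeRel ED) F) (htw : (t, w) ∈ ED)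
    (hin : ∀ z, (z, w) ∉ F) (hop : (w, t) ∉ F) :
    IsDirectedForest (edgeRel ED) (insert (t, w) F) := by
  have hFsub : F ⊆ ED := forest_edges_subset hF
  have htwne : t ≠ w := fun h => hirr w (h ▸ htw)
  have hsub : insert (t, w) F ⊆ ED := Finset.insert_subset htw hFsub
  refine ⟨?_, ?_, ?_⟩
  · intro e he
    simpa [edgeRel] using hsub he
  · intro x y y' hy hy'
    rcases Finset.mem_insert.mp hy with h | h <;>
      rcases Finset.mem_insert.mp hy' with h' | h'
    · rw [Prod.mk.injEq] at h h'
      rw [h.1, h'.1]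
    · exfalso
      rw [Prod.mk.injEq] at h
      exact hin y' (h.2 ▸ h')
    · exfalso
      rw [Prod.mk.injEq] at h'
      exact hin y (h'.2 ▸ h)
    · exact hF.2.1 x y y' h h'
  · refine no_cycle (insert (t, w) F).card _ le_rfl
      (fun T'' hs hne => hhl T'' (hs.trans hsub) hne)
      (fun y hy => hirr y (hsub hy)) ?_
    intro a b hab hba
    rcases Finset.mem_insert.mp hab with h | h <;>
      rcases Finset.mem_insert.mp hba with h' | h'
    · rw [Prod.mk.injEq] at h h'
      exact htwne (h.1.symm.trans h'.2)
    · rw [Prod.mk.injEq] at h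
      exact hop (h.1 ▸ h.2 ▸ h')
    · rw [Prod.mk.injEq] at h'
      exact hop (h'.1 ▸ h'.2 ▸ h)
    · exact forest_oppfree hF h h'

theorem del_iff {V : Type} [DecidableEq V] {ED : Finset (V × V)} (e : V × V)
    (F : Finset (V × V)) :
    (IsDirectedForest (edgeRel ED) F ∧ e ∉ F) ↔ IsDirectedForest (edgeRel (ED.erase e)) F := by
  constructor
  · rintro ⟨hF, he⟩
    refine ⟨?_, hF.2.1, hF.2.2⟩
    intro x hx
    have : x ∈ ED := forest_edges_subset hF hx
    have hxe : x ≠ e := fun h => he (h ▸ hx)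
    simp [edgeRel, Finset.mem_erase, hxe, this]
  · intro hF
    have hsub : F ⊆ ED.erase e := forest_edges_subset hF
    refine ⟨⟨?_, hF.2.1, hF.2.2⟩, fun he => ?_⟩
    · intro x hx
      have := hsub hx
      simp only [Finset.mem_erase] at this
      simpa [edgeRel] using this.2
    · exact (Finset.mem_erase.mp (hsub he)).1 rfl

/-- The link of an edge `(s,u)`: forests `F` such that `F ∪ {(s,u)}` is a forest are
exactly the forests in the digraph with all in-edges of `u` and the edge `(u,s)` removed. -/
theorem link_iff {V : Type} [DecidableEq V] {ED : Finset (V × V)} {s u : V}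
    (hhl : ∀ T' ⊆ ED, T'.Nonempty → HasLeaf T') (hirr : ∀ x, (x, x) ∉ ED)
    (hsu : (s, u) ∈ ED) (F : Finset (V × V)) :
    ((s, u) ∉ F ∧ IsDirectedForest (edgeRel ED) (insert (s, u) F)) ↔
      IsDirectedForest (edgeRel ((ED.filter fun e => e.2 ≠ u).erase (u, s))) F := by
  have hsune : s ≠ u := fun h => hirr u (h ▸ hsu)
  constructor
  · rintro ⟨hsF, hF⟩
    have hF' : IsDirectedForest (edgeRel ED) F :=
      forest_subset hF (Finset.subset_insert _ _)
    refine ⟨?_, hF'.2.1, hF'.2.2⟩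
    intro e he
    have heED : e ∈ ED := forest_edges_subset hF' he
    have he2 : e.2 ≠ u := by
      intro h2
      have h1 : e.1 = s := hF.2.1 u e.1 s
        (by rw [← h2]; exact Finset.mem_insert_of_mem he) (Finset.mem_insert_self _ _)
      apply hsF
      have : e = (s, u) := Prod.ext h1 h2
      exact this ▸ he
    have hne : e ≠ (u, s) := by
      intro h
      apply hF.2.2 u [s, u] (by simp)
      have hus : (u, s) ∈ insert (s, u) F := Finset.mem_insert_of_mem (h ▸ he)
      exact ⟨hus, Finset.mem_insert_self _ _, rfl⟩
    simp [edgeRel, Finset.mem_erase, Finset.mem_filter, hne, heED, he2]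
  · intro hF
    have hsub : F ⊆ (ED.filter fun e => e.2 ≠ u).erase (u, s) := forest_edges_subset hF
    have hFED : F ⊆ ED := fun e he => (Finset.mem_filter.mp (Finset.mem_of_mem_erase (hsub he))).1
    have hnou : ∀ z, (z, u) ∉ F := by
      intro z hz
      exact (Finset.mem_filter.mp (Finset.mem_of_mem_erase (hsub hz))).2 rfl
    have hnus : (u, s) ∉ F := fun h => (Finset.mem_erase.mp (hsub h)).1 rfl
    have hsF : (s, u) ∉ F := hnou s
    refine ⟨hsF, ?_, ?_, ?_⟩
    · intro e he
      rcases Finset.mem_insert.mp he with h | h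
      · simpa [edgeRel] using h ▸ hsu
      · simpa [edgeRel] using hFED h
    · intro x y y' hy hy'
      rcases Finset.mem_insert.mp hy with h | h <;>
        rcases Finset.mem_insert.mp hy' with h' | h'
      · rw [Prod.mk.injEq] at h h'
        rw [h.1, h'.1]
      · exfalso
        rw [Prod.mk.injEq] at h
        exact hnou y' (h.2 ▸ h')
      · exfalso
        rw [Prod.mk.injEq] at h'
        exact hnou y (h'.2 ▸ h)
      · exact hF.2.1 x y y' h h'
    · have hsub2 : insert (s, u) F ⊆ ED := Finset.insert_subset hsu hFED
      refine no_cycle (insert (s, u) F).card _ le_rfl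
        (fun T'' hs hne => hhl T'' (hs.trans hsub2) hne)
        (fun y hy => hirr y (hsub2 hy)) ?_
      intro a b hab hba
      rcases Finset.mem_insert.mp hab with h | h <;>
        rcases Finset.mem_insert.mp hba with h' | h'
      · rw [Prod.mk.injEq] at h h'
        exact hsune (h.1.symm.trans h'.2)
      · rw [Prod.mk.injEq] at h
        exact hnus (h.1 ▸ h.2 ▸ h')
      · rw [Prod.mk.injEq] at h'
        exact hnus (h'.1 ▸ h'.2 ▸ h)
      · exact forest_oppfree hF h h'

theorem vd_congr {α : Type} [DecidableEq α] {K K' : Finset α → Prop}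
    (h : ∀ F, K F ↔ K' F) (hK : VertexDecomposable K) : VertexDecomposable K' := by
  have : K = K' := funext fun F => propext (h F)
  exact this ▸ hK

end ForestVD
namespace ForestVD

/-- A cone (with apex `a`) over a vertex decomposable complex is vertex decomposable. -/
theorem cone_aux {α : Type} [DecidableEq α] {D : Finset α → Prop} (hD : VertexDecomposable D) :
    ∀ (K : Finset α → Prop) (a : α),
      (∀ F, D F ↔ (K F ∧ a ∉ F)) →
      (∀ F F' : Finset α, F' ⊆ F → K F → K F') →
      (∀ F, K F → K (insert a F)) →
      VertexDecomposable K := by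
  induction hD with
  | ofEmpty K0 h =>
    intro K a hiff hdc hcone
    refine VertexDecomposable.ofEmpty K fun F hF => ?_
    exact h (F.erase a) ((hiff _).mpr ⟨hdc F _ (Finset.erase_subset _ _) hF,
      Finset.notMem_erase _ _⟩)
  | ofSimplex K0 S h =>
    intro K a hiff hdc hcone
    refine VertexDecomposable.ofSimplex K (insert a S) fun F => ⟨fun hF => ?_, fun hF => ?_⟩
    · have h1 : K (F.erase a) := hdc F _ (Finset.erase_subset _ _) hF
      have h2 : F.erase a ⊆ S := (h _).mp ((hiff _).mpr ⟨h1, Finset.notMem_erase _ _⟩)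
      intro x hx
      rcases eq_or_ne x a with rfl | hxa
      · exact Finset.mem_insert_self _ _
      · exact Finset.mem_insert_of_mem (h2 (Finset.mem_erase.mpr ⟨hxa, hx⟩))
    · have h2 : F.erase a ⊆ S := by
        intro x hx
        have := hF (Finset.mem_of_mem_erase hx)
        rcases Finset.mem_insert.mp this with rfl | h'
        · exact absurd rfl (Finset.mem_erase.mp hx).1
        · exact h'
      have h1 : K (F.erase a) := ((hiff _).mp ((h _).mpr h2)).1
      have h3 : K (insert a (F.erase a)) := hcone _ h1
      rcases eq_or_ne (insert a (F.erase a)) F with heq | hne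
      · exact heq ▸ h3
      · -- then a ∉ F, so F.erase a = F
        by_cases haF : a ∈ F
        · exact absurd (Finset.insert_erase haF) hne
        · rwa [Finset.erase_eq_of_notMem haF] at h1
  | shed K0 v hsh hdel hlink ihdel ihlink =>
    intro K a hiff hdc hcone
    by_cases hva : v = a
    · subst hva
      refine ihdel K v (fun F => ?_) hdc hcone
      constructor
      · rintro ⟨h1, h2⟩
        exact (hiff F).mp h1
      · rintro ⟨h1, h2⟩
        exact ⟨(hiff F).mpr ⟨h1, h2⟩, h2⟩
    · apply VertexDecomposable.shed K v
      · -- shedding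
        intro F hvF hKins
        have hv0 : v ∉ F.erase a := fun h => hvF (Finset.mem_of_mem_erase h)
        have hK0 : K0 (insert v (F.erase a)) := by
          refine (hiff _).mpr ⟨hdc (insert v F) _ ?_ hKins, ?_⟩
          · exact Finset.insert_subset_insert _ (Finset.erase_subset _ _)
          · simp only [Finset.mem_insert]
            rintro (rfl | h)
            · exact hva rfl
            · exact Finset.notMem_erase _ _ h
        obtain ⟨F', hF', hvF', hsub⟩ := hsh (F.erase a) hv0 hK0
        have hKF' : K F' ∧ a ∉ F' := (hiff _).mp hF'
        by_cases haF : a ∈ F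
        · refine ⟨insert a F', hcone _ hKF'.1, ?_, ?_, ?_⟩
          · simp only [Finset.mem_insert]
            rintro (rfl | h)
            · exact hva rfl
            · exact hvF' h
          · intro x hx
            rcases eq_or_ne x a with rfl | hxa
            · exact Finset.mem_insert_self _ _
            · exact Finset.mem_insert_of_mem (hsub.1 (Finset.mem_erase.mpr ⟨hxa, hx⟩))
          · intro hcon
            obtain ⟨y, hyF', hyne⟩ := Finset.exists_of_ssubset hsub
            have hya : y ≠ a := fun h => hKF'.2 (h ▸ hyF')
            have : y ∈ F := by
              have := hcon (Finset.mem_insert_of_mem hyF')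
              exact this
            exact hyne (Finset.mem_erase.mpr ⟨hya, this⟩)
        · rw [Finset.erase_eq_of_notMem haF] at hsub
          exact ⟨F', hKF'.1, hvF', hsub⟩
      · -- deletion
        refine ihdel (fun F => K F ∧ v ∉ F) a (fun F => ?_) ?_ ?_
        · constructor
          · rintro ⟨h1, h2⟩
            have := (hiff F).mp h1
            exact ⟨⟨this.1, h2⟩, this.2⟩
          · rintro ⟨⟨h1, h2⟩, h3⟩
            exact ⟨(hiff F).mpr ⟨h1, h3⟩, h2⟩
        · rintro F F' hsub ⟨h1, h2⟩
          exact ⟨hdc F F' hsub h1, fun h => h2 (hsub h)⟩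
        · rintro F ⟨h1, h2⟩
          refine ⟨hcone _ h1, ?_⟩
          simp only [Finset.mem_insert]
          rintro (rfl | h)
          · exact hva rfl
          · exact h2 h
      · -- link
        refine ihlink (fun F => v ∉ F ∧ K (insert v F)) a (fun F => ?_) ?_ ?_
        · constructor
          · rintro ⟨h1, h2⟩
            have := (hiff _).mp h2
            refine ⟨⟨h1, this.1⟩, fun h => this.2 (Finset.mem_insert_of_mem h)⟩
          · rintro ⟨⟨h1, h2⟩, h3⟩
            refine ⟨h1, (hiff _).mpr ⟨h2, ?_⟩⟩
            simp only [Finset.mem_insert]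
            rintro (h | h)
            · exact hva h.symm
            · exact h3 h
        · rintro F F' hsub ⟨h1, h2⟩
          exact ⟨fun h => h1 (hsub h),
            hdc (insert v F) _ (Finset.insert_subset_insert _ hsub) h2⟩
        · rintro F ⟨h1, h2⟩
          refine ⟨?_, ?_⟩
          · simp only [Finset.mem_insert]
            rintro (rfl | h)
            · exact hva rfl
            · exact h1 h
          · rw [Finset.insert_comm]
            exact hcone _ h2

end ForestVD
namespace ForestVD

theorem main_empty {V : Type} [DecidableEq V] :
    VertexDecomposable (fun F : Finset (V × V) => IsDirectedForest (edgeRel (∅ : Finset (V × V))) F) := by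
  refine VertexDecomposable.ofSimplex _ ∅ fun F => ⟨fun hF => forest_edges_subset hF, fun h => ?_⟩
  have : F = ∅ := Finset.subset_empty.mp h
  rw [this]
  exact forest_empty _

theorem main {V : Type} [DecidableEq V] :
    ∀ (n : ℕ) (ED : Finset (V × V)), ED.card ≤ n →
      (∀ x, (x, x) ∉ ED) → (∀ T ⊆ ED, T.Nonempty → HasLeaf T) →
      VertexDecomposable (fun F : Finset (V × V) => IsDirectedForest (edgeRel ED) F) := by
  intro n
  induction n with
  | zero =>
    intro ED hcard _ _
    have : ED = ∅ := Finset.card_eq_zero.mp (Nat.le_zero.mp hcard)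
    exact this ▸ main_empty
  | succ n ih =>
    intro ED hcard hirr hhl
    by_cases hED : ED = ∅
    · exact hED ▸ main_empty
    obtain ⟨u, v, hedge, hleaf⟩ := hhl ED Finset.Subset.rfl (Finset.nonempty_of_ne_empty hED)
    have huv : u ≠ v := by
      rintro rfl
      rcases hedge with h | h <;> exact hirr u h
    -- recursion for one edge removed
    have hrec : ∀ e ∈ ED,
        VertexDecomposable (fun F : Finset (V × V) => IsDirectedForest (edgeRel (ED.erase e)) F) := by
      intro e he
      refine ih (ED.erase e) ?_ (fun x hx => hirr x (Finset.erase_subset _ _ hx))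
        (fun T hT hne => hhl T (hT.trans (Finset.erase_subset _ _)) hne)
      rw [Finset.card_erase_of_mem he]
      omega
    -- recursion for the link complexes
    have hlinkrec : ∀ s : V, (s, u) ∈ ED →
        VertexDecomposable (fun F : Finset (V × V) =>
          IsDirectedForest (edgeRel ((ED.filter fun e => e.2 ≠ u).erase (u, s))) F) := by
      intro s hsu
      set ED2 := (ED.filter fun e => e.2 ≠ u).erase (u, s) with hED2
      have hsub2 : ED2 ⊆ ED.erase (s, u) := by
        intro e he
        have h3 := Finset.mem_of_mem_erase he
        rw [Finset.mem_filter] at h3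
        refine Finset.mem_erase.mpr ⟨?_, h3.1⟩
        intro h
        exact h3.2 (by rw [h])
      have hsubED : ED2 ⊆ ED := hsub2.trans (Finset.erase_subset _ _)
      refine ih ED2 ?_ (fun x hx => hirr x (hsubED hx))
        (fun T hT hne => hhl T (hT.trans hsubED) hne)
      have := Finset.card_le_card hsub2
      rw [Finset.card_erase_of_mem hsu] at this
      omega
    by_cases h1 : (u, v) ∈ ED <;> by_cases h2 : (v, u) ∈ ED
    · -- Case A : both directions present at the leaf; shed the out-edge (v,u)
      apply VertexDecomposable.shed _ ((v, u) : V × V)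
      · intro F hvuF hKins
        have hF : IsDirectedForest (edgeRel ED) F :=
          forest_subset hKins (Finset.subset_insert _ _)
        have hFsub : F ⊆ ED := forest_edges_subset hF
        have huvF : (u, v) ∉ F := by
          intro h
          apply hKins.2.2 v [u, v] (by simp)
          have hx : (v, u) ∈ insert (v, u) F := Finset.mem_insert_self _ _
          have hy : (u, v) ∈ insert (v, u) F := Finset.mem_insert_of_mem h
          exact ⟨hx, hy, rfl⟩
        have hinv : ∀ z, (z, v) ∉ F := by
          intro z hz
          rcases eq_or_ne z u with rfl | hne
          · exact huvF hz
          · exact (hleaf z hne).1 (hFsub hz)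
        refine ⟨insert (u, v) F, forest_insert hhl hirr hF h1 hinv hvuF, ?_,
          Finset.ssubset_insert huvF⟩
        simp only [Finset.mem_insert]
        rintro (h | h)
        · rw [Prod.mk.injEq] at h
          exact huv h.2
        · exact hvuF h
      · exact vd_congr (fun F => (del_iff (v, u) F).symm) (hrec _ h2)
      · exact vd_congr (fun F => (link_iff hhl hirr h2 F).symm) (hlinkrec v h2)
    · -- Case B1 : only the in-edge (u,v) at the leaf; the complex is a cone with apex (u,v)
      refine cone_aux (hrec _ h1) _ ((u, v) : V × V)
        (fun F => (del_iff (u, v) F).symm) (fun F F' hsub hF => forest_subset hF hsub) ?_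
      intro F hF
      by_cases h : (u, v) ∈ F
      · rwa [Finset.insert_eq_self.mpr h]
      · refine forest_insert hhl hirr hF h1 ?_ ?_
        · intro z hz
          rcases eq_or_ne z u with rfl | hne
          · exact h hz
          · exact (hleaf z hne).1 (forest_edges_subset hF hz)
        · intro hz
          exact h2 (forest_edges_subset hF hz)
    · -- Case B2 : only the out-edge (v,u) at the leaf
      by_cases hy : ∃ y, y ≠ v ∧ (y, u) ∈ ED
      · obtain ⟨y, hyv, hyu⟩ := hy
        apply VertexDecomposable.shed _ ((y, u) : V × V)
        · intro F hyuF hKins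
          have hF : IsDirectedForest (edgeRel ED) F :=
            forest_subset hKins (Finset.subset_insert _ _)
          have hFsub : F ⊆ ED := forest_edges_subset hF
          have hinu : ∀ z, (z, u) ∉ F := by
            intro z hz
            have := hKins.2.1 u z y (Finset.mem_insert_of_mem hz) (Finset.mem_insert_self _ _)
            exact hyuF (this ▸ hz)
          have huvF : (u, v) ∉ F := fun h => h1 (hFsub h)
          refine ⟨insert (v, u) F, forest_insert hhl hirr hF h2 hinu huvF, ?_,
            Finset.ssubset_insert (hinu v)⟩
          simp only [Finset.mem_insert]
          rintro (h | h)
          · rw [Prod.mk.injEq] at h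
            exact hyv h.1
          · exact hyuF h
        · exact vd_congr (fun F => (del_iff (y, u) F).symm) (hrec _ hyu)
        · exact vd_congr (fun F => (link_iff hhl hirr hyu F).symm) (hlinkrec y hyu)
      · -- no other in-edge of u: cone with apex (v,u)
        refine cone_aux (hrec _ h2) _ ((v, u) : V × V)
          (fun F => (del_iff (v, u) F).symm) (fun F F' hsub hF => forest_subset hF hsub) ?_
        intro F hF
        by_cases h : (v, u) ∈ F
        · rwa [Finset.insert_eq_self.mpr h]
        · refine forest_insert hhl hirr hF h2 ?_ ?_
          · intro z hz
            rcases eq_or_ne z v with rfl | hne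
            · exact h hz
            · exact hy ⟨z, hne, forest_edges_subset hF hz⟩
          · intro hz
            exact h1 (forest_edges_subset hF hz)
    · -- no edge at all at the leaf : contradiction
      exact absurd hedge (by simp [h1, h2])

end ForestVD
namespace ForestVD

theorem walk_of_dipath {V : Type} {G : SimpleGraph V} {S : V → V → Prop}
    (hadj : ∀ x y, S x y → G.Adj x y) :
    ∀ (q : List V) (x y : V), IsDipath S x y q → ∃ W : G.Walk x y, W.support = x :: q := by
  intro q
  induction q with
  | nil =>
    intro x y h
    have hxy : x = y := h
    subst hxy
    exact ⟨SimpleGraph.Walk.nil, rfl⟩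
  | cons c q' ih =>
    rintro x y ⟨h1, h2⟩
    obtain ⟨W, hW⟩ := ih c y h2
    exact ⟨SimpleGraph.Walk.cons (hadj _ _ h1) W, by simp [hW]⟩

/-- Any nonempty set of directed edges supported on a tree has a leaf. -/
theorem tree_hasLeaf {V : Type} [Fintype V] [DecidableEq V] {G : SimpleGraph V}
    (hG : G.IsTree) (T : Finset (V × V)) (hadj : ∀ e ∈ T, G.Adj e.1 e.2)
    (hT : T.Nonempty) : HasLeaf T := by
  classical
  set S : V → V → Prop := fun x y => (x, y) ∈ T ∨ (y, x) ∈ T with hS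
  have hSadj : ∀ x y, S x y → G.Adj x y := by
    intro x y h
    rcases h with h | h
    · exact hadj (x, y) h
    · exact (hadj (y, x) h).symm
  set A : Set ℕ := {n | 1 ≤ n ∧ ∃ a b p, IsDipath S a b p ∧ (a :: p).Nodup ∧ p.length = n}
    with hA
  have hAne : A.Nonempty := by
    obtain ⟨e, he⟩ := hT
    refine ⟨1, le_rfl, e.1, e.2, [e.2], ⟨Or.inl (by simpa using he), rfl⟩, ?_, rfl⟩
    simp [(hadj e he).ne]
  have hAbdd : BddAbove A := by
    refine ⟨Fintype.card V, fun m hm => ?_⟩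
    obtain ⟨-, a, b, p, -, hnd, hlen⟩ := hm
    have := hnd.length_le_card
    simp only [List.length_cons] at this
    omega
  obtain ⟨h1n, a, b, p, hp, hnd, hlen⟩ := Nat.sSup_mem hAne hAbdd
  have hpne : p ≠ [] := by
    intro h
    rw [h] at hlen
    simp at hlen
    omega
  obtain ⟨q, u, hq, hqp, hub⟩ := dipath_snoc hpne hp
  have key : ∀ w, w ≠ u → ¬ S b w := by
    intro w hwu hSbw
    have hwb : w ≠ b := (hSadj b w hSbw).ne'
    by_cases hw : w ∈ a :: p
    · -- `w` lies on the maximal path: find two distinct paths from `w` to `b` in the tree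
      obtain ⟨p2, hp2, hsuf⟩ := dipath_suffix hp hw
      have hnd2 : (w :: p2).Nodup := hnd.sublist hsuf.sublist
      cases p2 with
      | nil => exact hwb hp2
      | cons c p2' =>
        cases p2' with
        | nil =>
          -- p2 = [c] with c = b, so w is the next-to-last vertex, i.e. w = u
          have hcb : c = b := hp2.2
          obtain ⟨r, hr⟩ := hsuf
          rw [hcb] at hr
          have hr2 : r ++ [w] ++ [b] = (a :: q) ++ [b] := by
            rw [List.append_assoc]
            simpa [hq] using hr
          have hr3 : r ++ [w] = a :: q := List.append_cancel_right hr2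
          exact hwu (dipath_eq_last hqp r w hr3.symm)
        | cons d p2'' =>
          -- p2 has length ≥ 2 : two distinct w-b paths in the tree
          obtain ⟨W, hWs⟩ := walk_of_dipath hSadj _ w b hp2
          have hWpath : W.IsPath := by
            rw [SimpleGraph.Walk.isPath_def, hWs]
            exact hnd2
          have hadjwb : G.Adj w b := (hSadj b w hSbw).symm
          have hW2path : (SimpleGraph.Walk.cons hadjwb SimpleGraph.Walk.nil).IsPath := by
            simp [SimpleGraph.Walk.isPath_def, hadjwb.ne]
          obtain ⟨-, huniq⟩ := SimpleGraph.isTree_iff_existsUnique_path.mp hG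
          obtain ⟨P, -, hPu⟩ := huniq w b
          have hWP : W = SimpleGraph.Walk.cons hadjwb SimpleGraph.Walk.nil :=
            (hPu W hWpath).trans (hPu _ hW2path).symm
          have hlens := congrArg (fun X : G.Walk w b => X.support.length) hWP
          simp only [hWs] at hlens
          simp at hlens
    · -- extend the maximal path : contradiction with maximality
      have hach : sSup A + 1 ∈ A := by
        refine ⟨by omega, a, w, p ++ [w], dipath_append1 hp hSbw, ?_, by simp [hlen]⟩
        rw [show a :: (p ++ [w]) = (a :: p) ++ [w] from rfl, List.nodup_append]
        refine ⟨hnd, by simp, ?_⟩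
        intro x hx y hy hxy
        simp only [List.mem_singleton] at hy
        rw [hxy, hy] at hx
        exact hw hx
      have := le_csSup hAbdd hach
      omega
  refine ⟨u, b, hub, fun w hwu => ⟨fun h => key w hwu (Or.inr h), fun h => key w hwu (Or.inl h)⟩⟩

end ForestVD
/-- If the digraph `E` is essentially a tree (replacing directed edges, or pairs of
opposite directed edges, by undirected edges yields a tree `G`), then the complex of
directed trees `Δ(E)` is vertex decomposable. -/
theorem forestComplex_vertexDecomposable_of_tree {V : Type} [Fintype V] [DecidableEq V]
    (E : V → V → Prop) (G : SimpleGraph V)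
    (hEG : ∀ x y : V, G.Adj x y ↔ E x y ∨ E y x) (hG : G.IsTree) :
    VertexDecomposable (fun F : Finset (V × V) => IsDirectedForest E F) := by
  classical
  set ED : Finset (V × V) := Finset.univ.filter (fun e => E e.1 e.2) with hED
  have hmem : ∀ e : V × V, e ∈ ED ↔ E e.1 e.2 := by
    intro e
    simp [hED]
  have hirr : ∀ x, (x, x) ∉ ED := by
    intro x hx
    exact G.irrefl ((hEG x x).mpr (Or.inl ((hmem _).mp hx)))
  have hhl : ∀ T ⊆ ED, T.Nonempty → ForestVD.HasLeaf T := by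
    intro T hT hne
    exact ForestVD.tree_hasLeaf hG T
      (fun e he => (hEG _ _).mpr (Or.inl ((hmem e).mp (hT he)))) hne
  refine ForestVD.vd_congr (fun F => ?_) (ForestVD.main ED.card ED le_rfl hirr hhl)
  constructor
  · rintro ⟨ha, hb, hc⟩
    exact ⟨fun e he => (hmem (e.1, e.2)).mp (ha e he), hb, hc⟩
  · rintro ⟨ha, hb, hc⟩
    exact ⟨fun e he => (hmem (e.1, e.2)).mpr (ha e he), hb, hc⟩
end

section
/- Let T be a basic tree with 2n vertices: n leaves v_1,...,v_n and n non-leaves u_1,...,u_n with v_i adjacent to u_i, every non-leaf adjacent to exactly one leaf. Let D be the double direction of T. Then the set of peripheral edges {v_1→u_1, ..., v_n→u_n} is a facet of Δ(D), i.e., a maximal directed forest in D with n edges forming a spanning directed forest whose trees cover all 2n vertices. -/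
section BasicTree

variable {V : Type} [Fintype V] [DecidableEq V]

/-- Hypotheses describing a basic tree with `2n` vertices: a tree `G` whose vertex set is
the disjoint union of the leaves `v 0, …, v (n-1)` (vertices of degree `1`) and the
non-leaves `u 0, …, u (n-1)`, with `v i` adjacent to `u i` (so every non-leaf is adjacent
to exactly one leaf). -/
structure IsBasicTree (n : ℕ) (G : SimpleGraph V) [DecidableRel G.Adj]
    (v u : Fin n → V) : Prop where
  isTree : G.IsTree
  bij : Function.Bijective (Sum.elim v u : Fin n ⊕ Fin n → V)
  adj : ∀ i : Fin n, G.Adj (v i) (u i)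
  leaf : ∀ i : Fin n, G.degree (v i) = 1
  nonleaf : ∀ i : Fin n, 2 ≤ n → G.degree (u i) ≠ 1

end BasicTree

/-- For a basic tree `T` with `2n` vertices and double direction `D`, the set of
peripheral edges `{v i → u i}` is a facet of `Δ(D)` with `n` edges, and its trees cover
all `2n` vertices. -/
theorem peripheral_edges_facet {V : Type} [Fintype V] [DecidableEq V] (n : ℕ) (hn : 1 ≤ n)
    (G : SimpleGraph V) [DecidableRel G.Adj] (v u : Fin n → V)
    (hbasic : IsBasicTree n G v u) :
    IsFacet G.Adj (Finset.univ.image fun i : Fin n => (v i, u i)) ∧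
    (Finset.univ.image fun i : Fin n => (v i, u i)).card = n ∧
    ∀ x : V, ∃ e ∈ (Finset.univ.image fun i : Fin n => (v i, u i) : Finset (V × V)),
      e.1 = x ∨ e.2 = x := by

  obtain ⟨htree, hbij, hadj, hleaf, hnonleaf⟩ := hbasic
  have hvu : ∀ i j : Fin n, v i ≠ u j := by
    intro i j h
    have := hbij.injective (a₁ := Sum.inl i) (a₂ := Sum.inr j) h
    simp at this
  have hvinj : Function.Injective v := fun i j h => by
    have := hbij.injective (a₁ := Sum.inl i) (a₂ := Sum.inl j) h
    simpa using this
  have huinj : Function.Injective u := fun i j h => by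
    have := hbij.injective (a₁ := Sum.inr i) (a₂ := Sum.inr j) h
    simpa using this
  set F : Finset (V × V) := Finset.univ.image fun i : Fin n => (v i, u i) with hF
  have hmem : ∀ e : V × V, e ∈ F ↔ ∃ i, v i = e.1 ∧ u i = e.2 := by
    intro e
    simp [hF, Finset.mem_image, Prod.ext_iff]
  have hforest : IsDirectedForest G.Adj F := by
    refine ⟨?_, ?_, ?_⟩
    · intro e he
      obtain ⟨i, h1, h2⟩ := (hmem e).1 he
      rw [← h1, ← h2]; exact hadj i
    · intro x y y' hy hy'
      obtain ⟨i, hi1, hi2⟩ := (hmem _).1 hy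
      obtain ⟨j, hj1, hj2⟩ := (hmem _).1 hy'
      have hij : i = j := huinj (hi2.trans hj2.symm)
      rw [show y = v i from hi1.symm, show y' = v j from hj1.symm, hij]
    · intro x p hp hpath
      match p, hpath with
      | [c], ⟨h1, h2⟩ =>
        obtain ⟨i, hi1, hi2⟩ := (hmem _).1 h1
        have hcx : c = x := h2
        exact hvu i i (hi1.trans (hcx ▸ hi2).symm)
      | c :: d :: q, ⟨h1, h2, h3⟩ =>
        obtain ⟨i, hi1, hi2⟩ := (hmem _).1 h1
        obtain ⟨j, hj1, hj2⟩ := (hmem _).1 h2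
        exact hvu j i (hj1.trans hi2.symm)
  have hFmem : ∀ j : Fin n, (v j, u j) ∈ F := fun j => (hmem _).2 ⟨j, rfl, rfl⟩
  refine ⟨⟨hforest, ?_⟩, ?_, ?_⟩
  · intro F' hF' hsub
    obtain ⟨hFE, hindeg, hcyc⟩ := hF'
    refine Finset.Subset.antisymm ?_ hsub
    rintro ⟨a, b⟩ he
    have hab : G.Adj a b := hFE _ he
    obtain ⟨w, hw⟩ := hbij.surjective b
    cases w with
    | inl j =>
      have hb : b = v j := hw.symm
      subst hb
      have haj : a = u j := by
        have h1 : (G.neighborFinset (v j)).card = 1 := hleaf j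
        have hu' : u j ∈ G.neighborFinset (v j) := by
          rw [SimpleGraph.mem_neighborFinset]; exact hadj j
        have ha' : a ∈ G.neighborFinset (v j) := by
          rw [SimpleGraph.mem_neighborFinset]; exact hab.symm
        exact Finset.card_le_one.mp (le_of_eq h1) a ha' (u j) hu'
      subst haj
      exact absurd ⟨hsub (hFmem j), he, rfl⟩ (hcyc (v j) [u j, v j] (by simp))
    | inr j =>
      have hb : b = u j := hw.symm
      subst hb
      have haj : a = v j := hindeg (u j) a (v j) he (hsub (hFmem j))
      exact (hmem _).2 ⟨j, haj.symm, rfl⟩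
  · rw [hF, Finset.card_image_of_injective _ (fun i j h => hvinj (Prod.ext_iff.1 h).1)]
    simp
  · intro x
    obtain ⟨w, hw⟩ := hbij.surjective x
    cases w with
    | inl j => exact ⟨(v j, u j), hFmem j, Or.inl hw⟩
    | inr j => exact ⟨(v j, u j), hFmem j, Or.inr hw⟩
end
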